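/- arXiv:2402.08033 — 7 statements merged into one kernel-verified Lean document; each statement's English description precedes it below -/
import Mathlib

section
/- For 0 < α < 1, the sequence A_n/(n a_n) converges to 1/(1-α) as n → ∞, and moreover |A_n/(n a_n) − 1/(1-α)| is asymptotically equivalent to 1/((1-α)Γ(α) n^{1-α}). -/
open Real Finset Filter

private lemma prod_gamma_aux (s : ℝ) (hs : 0 < s) (n : ℕ) :
    ∏ j ∈ Finset.range (n + 1), (s + j) = Real.Gamma (s + n + 1) / Real.Gamma s := by
  induction n with
  | zero =>
      simp [Real.Gamma_add_one hs.ne', mul_div_assoc,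
        div_self (Real.Gamma_pos_of_pos hs).ne']
  | succ n ih =>
      rw [Finset.prod_range_succ, ih]
      have h1 : s + (n : ℝ) + 1 ≠ 0 := by positivity
      have : Real.Gamma (s + (n + 1 : ℕ) + 1) = (s + n + 1) * Real.Gamma (s + n + 1) := by
        push_cast
        rw [show s + ((n : ℝ) + 1) + 1 = (s + n + 1) + 1 by ring, Real.Gamma_add_one h1]
      rw [this]
      push_cast
      field_simp
      ring

private lemma gammaseq_ratio (s : ℝ) (hs : 0 < s) :
    Tendsto (fun n : ℕ => (n : ℝ) ^ s * Real.Gamma ((n : ℝ) + 1) / Real.Gamma (s + n + 1))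
      atTop (nhds 1) := by
  have hG : Real.Gamma s ≠ 0 := (Real.Gamma_pos_of_pos hs).ne'
  have h := (Real.GammaSeq_tendsto_Gamma s).div_const (Real.Gamma s)
  rw [div_self hG] at h
  refine h.congr (fun n => ?_)
  have hG2 : Real.Gamma (s + n + 1) ≠ 0 := by
    have : (0:ℝ) < s + n + 1 := by positivity
    exact (Real.Gamma_pos_of_pos this).ne'
  rw [Real.GammaSeq, prod_gamma_aux s hs n, Real.Gamma_nat_eq_factorial n]
  field_simp

private lemma key_lim (α : ℝ) (hα0 : 0 < α) (hα1 : α < 1) :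
    Tendsto (fun n : ℕ => (n : ℝ) ^ (1 - α) * Real.Gamma ((n : ℝ) + α) / Real.Gamma ((n : ℝ) + 1))
      atTop (nhds 1) := by
  have ht := gammaseq_ratio α hα0
  have hc : Tendsto (fun n : ℕ => (n : ℝ) / ((n : ℝ) + α)) atTop (nhds 1) :=
    tendsto_natCast_div_add_atTop α
  have h := hc.div ht one_ne_zero
  rw [div_one] at h
  refine h.congr' ?_
  filter_upwards [eventually_ge_atTop 1] with n hn
  have hnpos : (0 : ℝ) < n := by exact_mod_cast hn
  have hGn : Real.Gamma ((n : ℝ) + 1) ≠ 0 := by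
    have : (0:ℝ) < (n:ℝ) + 1 := by positivity
    exact (Real.Gamma_pos_of_pos this).ne'
  have hGna : Real.Gamma ((n : ℝ) + α) ≠ 0 := by
    have : (0:ℝ) < (n:ℝ) + α := by positivity
    exact (Real.Gamma_pos_of_pos this).ne'
  have hsplit : Real.Gamma (α + n + 1) = ((n : ℝ) + α) * Real.Gamma ((n : ℝ) + α) := by
    rw [show α + (n:ℝ) + 1 = ((n:ℝ) + α) + 1 by ring, Real.Gamma_add_one (by positivity)]
  have hrpow : (n : ℝ) ^ (1 - α) = (n : ℝ) / (n : ℝ) ^ α := by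
    rw [Real.rpow_sub hnpos, Real.rpow_one]
  have hna : (0:ℝ) < (n:ℝ) ^ α := Real.rpow_pos_of_pos hnpos α
  simp only [Pi.div_apply]
  rw [hsplit, hrpow]
  field_simp

theorem lrrw_An_ratio_asymptotics (α : ℝ) (hα0 : 0 < α) (hα1 : α < 1)
    (a : ℕ → ℝ)
    (ha : ∀ k : ℕ, a k = Real.Gamma k * Real.Gamma (α + 1) / Real.Gamma ((k : ℝ) + α))
    (A : ℕ → ℝ) (hA : ∀ n : ℕ, A n = ∑ k ∈ Finset.Icc 1 n, a k) :
    Tendsto (fun n : ℕ => A n / ((n : ℝ) * a n)) atTop (nhds (1 / (1 - α))) ∧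
    Tendsto (fun n : ℕ =>
        |A n / ((n : ℝ) * a n) - 1 / (1 - α)| /
          (1 / ((1 - α) * Real.Gamma α * (n : ℝ) ^ (1 - α)))) atTop (nhds 1) := by
  have h1α : (0:ℝ) < 1 - α := by linarith
  have hGα : (0:ℝ) < Real.Gamma α := Real.Gamma_pos_of_pos hα0
  have hGα1 : (0:ℝ) < Real.Gamma (α + 1) := Real.Gamma_pos_of_pos (by linarith)
  -- closed form of A
  have hAcf : ∀ n : ℕ, A n = Real.Gamma (α + 1) / (1 - α) *
      (Real.Gamma ((n : ℝ) + 1) / Real.Gamma ((n : ℝ) + α) - 1 / Real.Gamma α) := by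
    intro n
    induction n with
    | zero => simp [hA, Real.Gamma_one]
    | succ n ih =>
        have hstep : A (n + 1) = A n + a (n + 1) := by
          rw [hA, hA, Finset.sum_Icc_succ_top (Nat.one_le_iff_ne_zero.mpr n.succ_ne_zero)]
        have hGn1 : (0:ℝ) < Real.Gamma ((n : ℝ) + 1) := Real.Gamma_pos_of_pos (by positivity)
        have hGna : (0:ℝ) < Real.Gamma ((n : ℝ) + α) := Real.Gamma_pos_of_pos (by positivity)
        have e1 : Real.Gamma ((↑(n+1) : ℝ) + 1) = ((n:ℝ) + 1) * Real.Gamma ((n:ℝ) + 1) := by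
          push_cast
          rw [show (n:ℝ) + 1 + 1 = ((n:ℝ) + 1) + 1 by ring, Real.Gamma_add_one (by positivity)]
        have e2 : Real.Gamma ((↑(n+1) : ℝ) + α) = ((n:ℝ) + α) * Real.Gamma ((n:ℝ) + α) := by
          push_cast
          rw [show (n:ℝ) + 1 + α = ((n:ℝ) + α) + 1 by ring, Real.Gamma_add_one (by positivity)]
        have e3 : a (n + 1) = Real.Gamma ((n:ℝ) + 1) * Real.Gamma (α + 1) /
            (((n:ℝ) + α) * Real.Gamma ((n:ℝ) + α)) := by
          rw [ha]
          push_cast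
          rw [← e2]
          push_cast
          ring_nf
        rw [hstep, ih, e3, e1, e2]
        have hnα : (0:ℝ) < (n:ℝ) + α := by positivity
        field_simp
        ring
  -- eventual formula for the ratio
  have hform : ∀ᶠ n : ℕ in atTop, A n / ((n : ℝ) * a n) =
      1 / (1 - α) * (1 - Real.Gamma ((n:ℝ) + α) / (Real.Gamma α * Real.Gamma ((n:ℝ) + 1))) := by
    filter_upwards [eventually_ge_atTop 1] with n hn
    have hnpos : (0 : ℝ) < n := by exact_mod_cast hn
    have hGn1 : (0:ℝ) < Real.Gamma ((n : ℝ) + 1) := Real.Gamma_pos_of_pos (by positivity)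
    have hGna : (0:ℝ) < Real.Gamma ((n : ℝ) + α) := Real.Gamma_pos_of_pos (by positivity)
    have hGn : (0:ℝ) < Real.Gamma (n : ℝ) := Real.Gamma_pos_of_pos hnpos
    have hna : (n:ℝ) * Real.Gamma (n:ℝ) = Real.Gamma ((n:ℝ) + 1) :=
      (Real.Gamma_add_one hnpos.ne').symm
    rw [hAcf, ha]
    rw [show (n:ℝ) * (Real.Gamma (n:ℝ) * Real.Gamma (α + 1) / Real.Gamma ((n:ℝ) + α)) =
      ((n:ℝ) * Real.Gamma (n:ℝ)) * Real.Gamma (α + 1) / Real.Gamma ((n:ℝ) + α) by ring, hna]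
    field_simp
  have hkey := key_lim α hα0 hα1
  constructor
  · -- first part
    have hE : Tendsto (fun n : ℕ => Real.Gamma ((n:ℝ) + α) / Real.Gamma ((n:ℝ) + 1))
        atTop (nhds 0) := by
      have hinf : Tendsto (fun n : ℕ => (n : ℝ) ^ (1 - α)) atTop atTop :=
        (tendsto_rpow_atTop h1α).comp tendsto_natCast_atTop_atTop
      have h0 := hkey.div_atTop hinf
      refine h0.congr' ?_
      filter_upwards [eventually_ge_atTop 1] with n hn
      have hnpos : (0 : ℝ) < n := by exact_mod_cast hn
      have hpo : (0:ℝ) < (n:ℝ) ^ (1 - α) := Real.rpow_pos_of_pos hnpos _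
      field_simp
    have hlim := ((tendsto_const_nhds.sub (hE.div_const (Real.Gamma α))).const_mul
      (1 / (1 - α)) : Tendsto (fun n : ℕ => 1 / (1 - α) *
        ((1:ℝ) - Real.Gamma ((n:ℝ) + α) / Real.Gamma ((n:ℝ) + 1) / Real.Gamma α))
        atTop (nhds (1 / (1 - α) * (1 - 0 / Real.Gamma α))))
    have hlim2 : Tendsto (fun n : ℕ => 1 / (1 - α) *
        ((1:ℝ) - Real.Gamma ((n:ℝ) + α) / Real.Gamma ((n:ℝ) + 1) / Real.Gamma α))
        atTop (nhds (1 / (1 - α))) := by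
      simpa using hlim
    refine Tendsto.congr' ?_ hlim2
    filter_upwards [hform] with n hfn
    rw [hfn, div_div, mul_comm (Real.Gamma ((n:ℝ) + 1))]
  · -- second part
    refine hkey.congr' ?_
    filter_upwards [hform, eventually_ge_atTop 1] with n hfn hn
    have hnpos : (0 : ℝ) < n := by exact_mod_cast hn
    have hGn1 : (0:ℝ) < Real.Gamma ((n : ℝ) + 1) := Real.Gamma_pos_of_pos (by positivity)
    have hGna : (0:ℝ) < Real.Gamma ((n : ℝ) + α) := Real.Gamma_pos_of_pos (by positivity)
    have hpo : (0:ℝ) < (n:ℝ) ^ (1 - α) := Real.rpow_pos_of_pos hnpos _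
    rw [hfn]
    have habs : |1 / (1 - α) *
        (1 - Real.Gamma ((n:ℝ) + α) / (Real.Gamma α * Real.Gamma ((n:ℝ) + 1))) - 1 / (1 - α)|
        = Real.Gamma ((n:ℝ) + α) / ((1 - α) * Real.Gamma α * Real.Gamma ((n:ℝ) + 1)) := by
      rw [show 1 / (1 - α) *
        (1 - Real.Gamma ((n:ℝ) + α) / (Real.Gamma α * Real.Gamma ((n:ℝ) + 1))) - 1 / (1 - α)
        = -(Real.Gamma ((n:ℝ) + α) / ((1 - α) * Real.Gamma α * Real.Gamma ((n:ℝ) + 1))) by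
          field_simp; ring]
      rw [abs_neg, abs_of_pos (by positivity)]
    rw [habs]
    field_simp
end

section
/- For 0 < α < 1, the sequence n^α · a_n converges to Γ(1+α) as n → ∞, where a_n = Γ(n)Γ(α+1)/Γ(n+α). -/
open Real Filter

theorem lrrw_an_stirling (α : ℝ) (hα0 : 0 < α) (hα1 : α < 1)
    (a : ℕ → ℝ)
    (ha : ∀ k : ℕ, a k = Real.Gamma k * Real.Gamma (α + 1) / Real.Gamma ((k : ℝ) + α)) :
    Tendsto (fun n : ℕ => (n : ℝ) ^ α * a n) atTop (nhds (Real.Gamma (1 + α))) := by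
  have hprod : ∀ n : ℕ, Real.Gamma (α + n) = Real.Gamma α * ∏ j ∈ Finset.range n, (α + j) := by
    intro n
    induction n with
    | zero => simp
    | succ n ih =>
      rw [Finset.prod_range_succ, ← mul_assoc, ← ih]
      push_cast
      rw [← add_assoc, Real.Gamma_add_one (by positivity)]
      ring
  have key : ∀ᶠ n : ℕ in atTop, (n : ℝ) ^ α * a n
      = Real.GammaSeq α n * (α * ((α + n) / n)) := by
    filter_upwards [eventually_ge_atTop 1] with n hn
    have hn0 : (0:ℝ) < n := by exact_mod_cast hn
    have hPpos : 0 < ∏ j ∈ Finset.range n, (α + (j:ℝ)) :=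
      Finset.prod_pos fun j _ => by positivity
    have hfac : (Nat.factorial n : ℝ) = n * Real.Gamma n := by
      rw [← Real.Gamma_add_one hn0.ne', Real.Gamma_nat_eq_factorial]
    rw [ha n, Real.GammaSeq, Finset.prod_range_succ, add_comm (n:ℝ) α, hprod n,
      Real.Gamma_add_one hα0.ne', hfac]
    have hΓα : 0 < Real.Gamma α := Real.Gamma_pos_of_pos hα0
    field_simp
  rw [show Real.Gamma (1 + α) = Real.Gamma α * (α * 1) by
    rw [add_comm, Real.Gamma_add_one hα0.ne']; ring]
  refine Tendsto.congr' (key.mono fun n h => h.symm) ?_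
  refine (Real.GammaSeq_tendsto_Gamma α).mul (Tendsto.const_mul α ?_)
  have : Tendsto (fun n : ℕ => α * (1 / (n:ℝ)) + 1) atTop (nhds (α * 0 + 1)) :=
    ((tendsto_one_div_atTop_nhds_zero_nat).const_mul α).add tendsto_const_nhds
  simp only [mul_zero, zero_add] at this
  refine this.congr' ?_
  filter_upwards [eventually_ge_atTop 1] with n hn
  have hn0 : (n:ℝ) ≠ 0 := by positivity
  field_simp
end

section
/- If α < 1/2 (and α ≥ 0), then with v_n = Σ_{k=1}^n a_k^2 and a_k = Γ(k)Γ(α+1)/Γ(k+α), the ratio v_n / n^{1-2α} converges to Γ(α+1)^2/(1-2α) as n → ∞. -/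
open Real Finset Filter

open Asymptotics
open scoped Topology

lemma lrrw_sum_aux {c : ℕ → ℝ} {s L : ℝ} (hs0 : 0 ≤ s) (hs1 : s < 1)
    (hc : Tendsto (fun k : ℕ => c k * ((k : ℝ) + 1) ^ s) atTop (nhds L)) :
    Tendsto (fun n : ℕ => (∑ k ∈ Finset.range n, c k) / (n : ℝ) ^ (1 - s)) atTop
      (nhds (L / (1 - s))) := by
  set p : ℝ := 1 - s with hpdef
  have hp : 0 < p := by simp only [hpdef]; linarith
  have hsp : s + p = 1 := by simp [hpdef]
  set w : ℕ → ℝ := fun k => ((k : ℝ) + 1) ^ p - (k : ℝ) ^ p with hwdef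
  have hwpos : ∀ k : ℕ, 0 < w k := by
    intro k
    exact sub_pos.2 (Real.rpow_lt_rpow (Nat.cast_nonneg k) (by linarith) hp)
  have hsum : ∀ n : ℕ, ∑ k ∈ Finset.range n, w k = (n : ℝ) ^ p := by
    intro n
    have h := Finset.sum_range_sub (fun i : ℕ => (i : ℝ) ^ p) n
    simp only [Nat.cast_add, Nat.cast_one, Nat.cast_zero] at h
    rw [show (∑ k ∈ Finset.range n, w k) =
      ∑ i ∈ Finset.range n, (((i : ℝ) + 1) ^ p - (i : ℝ) ^ p) from rfl]
    rw [h, Real.zero_rpow hp.ne', sub_zero]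
  have h2 : Tendsto (fun k : ℕ => ((k : ℝ) + 1) ^ s * w k) atTop (nhds p) := by
    have hderiv : HasDerivAt (fun x : ℝ => x ^ p) (p * (1 : ℝ) ^ (p - 1)) 1 :=
      Real.hasDerivAt_rpow_const (Or.inl one_ne_zero)
    rw [Real.one_rpow, mul_one] at hderiv
    have hslope := hasDerivAt_iff_tendsto_slope.1 hderiv
    have hx : Tendsto (fun k : ℕ => (k : ℝ) / ((k : ℝ) + 1)) atTop (𝓝[≠] (1 : ℝ)) := by
      apply tendsto_nhdsWithin_of_tendsto_nhds_of_eventually_within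
      · exact tendsto_natCast_div_add_atTop (1 : ℝ)
      · filter_upwards with k
        have hk1 : (0:ℝ) < (k : ℝ) + 1 := by positivity
        have hlt : (k : ℝ) / ((k : ℝ) + 1) < 1 := by
          rw [div_lt_one hk1]; linarith
        simp [hlt.ne]
    have hcomp := hslope.comp hx
    apply hcomp.congr
    intro k
    have hA : (0:ℝ) < (k : ℝ) + 1 := by positivity
    have hAp : (0:ℝ) < ((k:ℝ)+1) ^ p := Real.rpow_pos_of_pos hA p
    have hmul : ((k:ℝ)+1) ^ s * ((k:ℝ)+1) ^ p = (k:ℝ) + 1 := by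
      rw [← Real.rpow_add hA, hsp, Real.rpow_one]
    simp only [Function.comp_apply, slope_def_field, Real.one_rpow]
    rw [Real.div_rpow (Nat.cast_nonneg k) hA.le]
    have e1 : (k:ℝ) ^ p / ((k:ℝ)+1) ^ p - 1 = ((k:ℝ) ^ p - ((k:ℝ)+1) ^ p) / ((k:ℝ)+1) ^ p := by
      rw [div_sub_one hAp.ne']
    have e2 : (k:ℝ) / ((k:ℝ)+1) - 1 = (-1) / ((k:ℝ)+1) := by
      rw [div_sub_one hA.ne']; congr 1; ring
    have hZ : ((k:ℝ)+1) ^ s = ((k:ℝ)+1) / ((k:ℝ)+1) ^ p := by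
      rw [eq_div_iff hAp.ne']; exact hmul
    rw [e1, e2, hZ]
    rw [div_div_div_comm, div_div_eq_mul_div]
    rw [div_neg, div_one, neg_sub]
    rw [div_mul_eq_mul_div, mul_comm]
  have hratio : Tendsto (fun k : ℕ => c k / w k) atTop (nhds (L / p)) := by
    have hd := hc.div h2 hp.ne'
    apply hd.congr
    intro k
    simp only [Pi.div_apply]
    have hA : (0:ℝ) < ((k:ℝ)+1) ^ s := Real.rpow_pos_of_pos (by positivity) s
    rw [mul_comm (((k:ℝ)+1) ^ s) (w k), mul_div_mul_right _ _ hA.ne']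
  have hlo : (fun k : ℕ => c k - L / p * w k) =o[atTop] w := by
    rw [Asymptotics.isLittleO_iff_tendsto (fun k hk => absurd hk (hwpos k).ne')]
    have hsub := hratio.sub_const (L / p)
    rw [sub_self] at hsub
    apply hsub.congr
    intro k
    rw [sub_div, mul_div_assoc, div_self (hwpos k).ne', mul_one]
  have hwsum_top : Tendsto (fun n : ℕ => ∑ k ∈ Finset.range n, w k) atTop atTop := by
    have h1 : Tendsto (fun n : ℕ => (n:ℝ) ^ p) atTop atTop :=
      (tendsto_rpow_atTop hp).comp tendsto_natCast_atTop_atTop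
    exact h1.congr fun n => (hsum n).symm
  have hsum_lo := (hlo.sum_range (fun k => (hwpos k).le) hwsum_top).congr
    (fun n => rfl) hsum
  have ht : Tendsto
      (fun n : ℕ => (∑ k ∈ Finset.range n, (c k - L / p * w k)) / (n:ℝ) ^ p)
      atTop (nhds 0) := by
    rw [← Asymptotics.isLittleO_iff_tendsto]
    · exact hsum_lo
    · intro n hn
      have hn0 : (n:ℝ) = 0 := (Real.rpow_eq_zero (Nat.cast_nonneg n) hp.ne').1 hn
      have : n = 0 := by exact_mod_cast hn0
      subst this; simp
  have hadd := ht.add (tendsto_const_nhds (x := L / p))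
  rw [zero_add] at hadd
  apply hadd.congr'
  filter_upwards [eventually_ge_atTop 1] with n hn
  have hnp : (0:ℝ) < (n:ℝ) ^ p :=
    Real.rpow_pos_of_pos (by exact_mod_cast Nat.succ_le_iff.mp hn) p
  rw [Finset.sum_sub_distrib, ← Finset.mul_sum, hsum, sub_div, mul_div_assoc,
    div_self hnp.ne', mul_one, sub_add_cancel]

lemma lrrw_gamma_aux (α : ℝ) (hα0 : 0 ≤ α) (a : ℕ → ℝ)
    (ha : ∀ k : ℕ, a k = Real.Gamma k * Real.Gamma (α + 1) / Real.Gamma ((k : ℝ) + α)) :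
    Tendsto (fun k : ℕ => a (k + 1) * ((k : ℝ) + 1) ^ α) atTop (nhds (Real.Gamma (α + 1))) := by
  rcases eq_or_lt_of_le hα0 with hα | hα
  · -- α = 0
    subst hα
    have : ∀ k : ℕ, a (k + 1) * ((k : ℝ) + 1) ^ (0:ℝ) = Real.Gamma (0 + 1) := by
      intro k
      have hpos : (0:ℝ) < Real.Gamma ((k + 1 : ℕ) : ℝ) :=
        Real.Gamma_pos_of_pos (by positivity)
      rw [ha, Real.rpow_zero, mul_one, add_zero, zero_add, Real.Gamma_one, mul_one,
        div_self hpos.ne']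
    exact tendsto_const_nhds.congr fun k => (this k).symm
  · -- α > 0
    have hΓα : (0:ℝ) < Real.Gamma α := Real.Gamma_pos_of_pos hα
    have hprod : ∀ k : ℕ, Real.Gamma (α + k) =
        (∏ j ∈ Finset.range k, (α + j)) * Real.Gamma α := by
      intro k
      induction k with
      | zero => simp
      | succ k ih =>
        have hne : α + (k : ℝ) ≠ 0 := by positivity
        have : α + ((k + 1 : ℕ) : ℝ) = (α + k) + 1 := by push_cast; ring
        rw [this, Real.Gamma_add_one hne, ih, Finset.prod_range_succ]
        ring
    have hprodpos : ∀ k : ℕ, (0:ℝ) < ∏ j ∈ Finset.range k, (α + j) :=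
      fun k => Finset.prod_pos fun j _ => by positivity
    -- limit of α * GammaSeq α k * ((k+1)/k)^α
    have hq : Tendsto (fun k : ℕ => (((k : ℝ) + 1) / (k : ℝ)) ^ α) atTop (nhds 1) := by
      have h1 : Tendsto (fun k : ℕ => 1 + 1 / (k : ℝ)) atTop (nhds 1) := by
        have := tendsto_one_div_atTop_nhds_zero_nat (𝕜 := ℝ)
        simpa using tendsto_const_nhds.add this
      have hc : ContinuousAt (fun x : ℝ => x ^ α) 1 :=
        Real.continuousAt_rpow_const 1 α (Or.inl one_ne_zero)
      have := (hc.tendsto.comp h1)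
      rw [Real.one_rpow] at this
      apply this.congr'
      filter_upwards [eventually_ge_atTop 1] with k hk
      have hk0 : (0:ℝ) < (k : ℝ) := by exact_mod_cast hk
      simp only [Function.comp_apply]
      congr 1
      field_simp
    have hgs := ((Real.GammaSeq_tendsto_Gamma α).const_mul α).mul hq
    rw [mul_one] at hgs
    have hlim : α * Real.Gamma α = Real.Gamma (α + 1) := (Real.Gamma_add_one hα.ne').symm
    rw [hlim] at hgs
    apply hgs.congr'
    filter_upwards [eventually_ge_atTop 1] with k hk
    have hk0 : (0:ℝ) < (k : ℝ) := by exact_mod_cast hk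
    have hkα : (0:ℝ) < (k:ℝ) ^ α := Real.rpow_pos_of_pos hk0 α
    have hΓk1 : Real.Gamma ((k + 1 : ℕ) : ℝ) = (Nat.factorial k : ℝ) := by
      push_cast
      exact_mod_cast Real.Gamma_nat_eq_factorial k
    have hΓkα : Real.Gamma (((k + 1 : ℕ) : ℝ) + α) =
        (∏ j ∈ Finset.range (k + 1), (α + j)) * Real.Gamma α := by
      rw [add_comm, hprod (k + 1)]
    rw [Real.GammaSeq]
    rw [ha (k + 1), hΓk1, hΓkα, Real.Gamma_add_one hα.ne',
      Real.div_rpow (by positivity) hk0.le]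
    have hP : (0:ℝ) < ∏ j ∈ Finset.range (k + 1), (α + j) := hprodpos (k + 1)
    field_simp


theorem lrrw_vn_diffusive (α : ℝ) (hα0 : 0 ≤ α) (hα : α < 1 / 2)
    (a : ℕ → ℝ)
    (ha : ∀ k : ℕ, a k = Real.Gamma k * Real.Gamma (α + 1) / Real.Gamma ((k : ℝ) + α))
    (v : ℕ → ℝ) (hv : ∀ n : ℕ, v n = ∑ k ∈ Finset.Icc 1 n, (a k) ^ 2) :
    Tendsto (fun n : ℕ => v n / (n : ℝ) ^ (1 - 2 * α)) atTop
      (nhds (Real.Gamma (α + 1) ^ 2 / (1 - 2 * α))) := by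
  have t := lrrw_gamma_aux α hα0 a ha
  have hc : Tendsto (fun k : ℕ => a (k + 1) ^ 2 * ((k : ℝ) + 1) ^ (2 * α)) atTop
      (nhds (Real.Gamma (α + 1) ^ 2)) := by
    have h2 := t.mul t
    rw [← pow_two] at h2
    apply h2.congr
    intro k
    have hA : (0:ℝ) < (k : ℝ) + 1 := by positivity
    rw [two_mul, Real.rpow_add hA]
    ring
  have hmain := lrrw_sum_aux (c := fun k : ℕ => a (k + 1) ^ 2) (s := 2 * α)
    (L := Real.Gamma (α + 1) ^ 2) (by linarith) (by linarith) hc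
  apply hmain.congr
  intro n
  congr 1
  rw [hv n, ← Finset.Ico_add_one_right_eq_Icc, Finset.sum_Ico_eq_sum_range]
  simp only [Nat.add_sub_cancel]
  exact Finset.sum_congr rfl fun i _ => by rw [add_comm]
end

section
/- If α = 1/2, then with a_k = Γ(k)Γ(3/2)/Γ(k+1/2) and v_n = Σ_{k=1}^n a_k^2, the ratio v_n / log n converges to π/4 as n → ∞. -/
open Real Finset Filter

theorem lrrw_vn_critical
    (a : ℕ → ℝ)
    (ha : ∀ k : ℕ, a k = Real.Gamma k * Real.Gamma (3 / 2) / Real.Gamma ((k : ℝ) + 1 / 2))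
    (v : ℕ → ℝ) (hv : ∀ n : ℕ, v n = ∑ k ∈ Finset.Icc 1 n, (a k) ^ 2) :
    Tendsto (fun n : ℕ => v n / Real.log n) atTop (nhds (Real.pi / 4)) := by
  -- recursion for a
  have hrec : ∀ k : ℕ, a (k + 2) = a (k + 1) * (((k : ℝ) + 1) / ((k : ℝ) + 1 + 1 / 2)) := by
    intro k
    have hG : (0:ℝ) < Real.Gamma ((k:ℝ) + 1 + 1/2) := Real.Gamma_pos_of_pos (by positivity)
    have hG3 : (0:ℝ) < Real.Gamma (3/2) := Real.Gamma_pos_of_pos (by norm_num)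
    rw [ha (k+2), ha (k+1)]
    have e2 : ((k+2 : ℕ) : ℝ) + 1/2 = ((k:ℝ) + 1 + 1/2) + 1 := by push_cast; ring
    have e1 : ((k+2 : ℕ) : ℝ) = ((k:ℝ) + 1) + 1 := by push_cast; ring
    have e3 : ((k+1 : ℕ) : ℝ) = (k:ℝ) + 1 := by push_cast; ring
    rw [e2, e1, e3, Real.Gamma_add_one (by positivity : ((k:ℝ) + 1) ≠ 0),
      Real.Gamma_add_one (by positivity : ((k:ℝ) + 1 + 1/2) ≠ 0)]
    field_simp
  -- key identity with the Wallis product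
  have key : ∀ k : ℕ, a (k + 1) ^ 2 = Real.Wallis.W k / (2 * (k:ℝ) + 1) := by
    intro k
    induction k with
    | zero =>
      have h1 : a 1 = 1 := by
        rw [ha 1]
        have e : ((1:ℕ) : ℝ) + 1/2 = 3/2 := by norm_num
        rw [e, Nat.cast_one, Real.Gamma_one, one_mul,
          div_self (Real.Gamma_pos_of_pos (by norm_num : (0:ℝ) < 3/2)).ne']
      rw [h1]
      norm_num [Real.Wallis.W]
    | succ k ih =>
      have h3 : (0:ℝ) < 2 * (k:ℝ) + 1 := by positivity
      have h4 : (0:ℝ) < 2 * (k:ℝ) + 3 := by positivity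
      have hW := (Real.Wallis.W_pos k).ne'
      rw [show k + 1 + 1 = k + 2 from rfl, hrec k, mul_pow, ih, Real.Wallis.W_succ]
      push_cast
      field_simp
      ring
  -- rewrite v n as a sum over range n
  have hsum : ∀ n : ℕ, v n = ∑ i ∈ Finset.range n, Real.Wallis.W i / (2 * (i:ℝ) + 1) := by
    intro n
    rw [hv n, ← Finset.Ico_add_one_right_eq_Icc, Finset.sum_Ico_eq_sum_range]
    simp only [Nat.add_sub_cancel]
    refine Finset.sum_congr rfl fun i _ => ?_
    rw [show 1 + i = i + 1 by ring, key i]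
  -- harmonic numbers as real sums
  have hharm : ∀ n : ℕ, ((harmonic n : ℚ) : ℝ) = ∑ i ∈ Finset.range n, ((i:ℝ) + 1)⁻¹ := by
    intro n
    rw [harmonic]
    push_cast
    rfl
  -- lower bound on v
  have hlow : ∀ n : ℕ, Real.pi / 4 * ((harmonic n : ℚ) : ℝ) ≤ v n := by
    intro n
    rw [hsum n, hharm n, Finset.mul_sum]
    refine Finset.sum_le_sum fun i _ => ?_
    have h1 : (0:ℝ) < 2 * (i:ℝ) + 1 := by positivity
    have h2 : (0:ℝ) < 2 * (i:ℝ) + 2 := by positivity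
    have h3 : (0:ℝ) < (i:ℝ) + 1 := by positivity
    have e : Real.pi / 4 * ((i:ℝ) + 1)⁻¹
        = (2 * (i:ℝ) + 1) / (2 * (i:ℝ) + 2) * (Real.pi / 2) / (2 * (i:ℝ) + 1) := by
      field_simp
      ring
    rw [e]
    gcongr
    exact Real.Wallis.le_W i
  -- upper bound on v
  have hup : ∀ n : ℕ, v n ≤ Real.pi / 4 * ((harmonic n : ℚ) : ℝ) + Real.pi / 2 := by
    intro n
    rw [hsum n, hharm n, Finset.mul_sum]
    have step : ∀ i ∈ Finset.range n, Real.Wallis.W i / (2 * (i:ℝ) + 1)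
        ≤ Real.pi / 4 * ((i:ℝ) + 1)⁻¹
          + ((fun j : ℕ => Real.pi / 2 / ((j:ℝ) + 1)) i
            - (fun j : ℕ => Real.pi / 2 / ((j:ℝ) + 1)) (i + 1)) := by
      intro i _
      simp only
      have h1 : (0:ℝ) < 2 * (i:ℝ) + 1 := by positivity
      have h2 : (0:ℝ) < 2 * (i:ℝ) + 2 := by positivity
      have h3 : (0:ℝ) < (i:ℝ) + 1 := by positivity
      have h4 : (0:ℝ) < (i:ℝ) + 2 := by positivity
      have hWle : Real.Wallis.W i / (2 * (i:ℝ) + 1) ≤ Real.pi / 2 / (2 * (i:ℝ) + 1) := by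
        gcongr
        exact Real.Wallis.W_le i
      refine hWle.trans ?_
      have e1 : Real.pi / 2 / (2 * (i:ℝ) + 1) - Real.pi / 4 * ((i:ℝ) + 1)⁻¹
          = Real.pi / 2 / ((2 * (i:ℝ) + 1) * (2 * (i:ℝ) + 2)) := by
        field_simp
        ring
      have e2 : Real.pi / 2 / ((i:ℝ) + 1) - Real.pi / 2 / (((i+1:ℕ):ℝ) + 1)
          = Real.pi / 2 / (((i:ℝ) + 1) * ((i:ℝ) + 2)) := by
        push_cast
        field_simp
        ring
      have e3 : Real.pi / 2 / ((2 * (i:ℝ) + 1) * (2 * (i:ℝ) + 2))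
          ≤ Real.pi / 2 / (((i:ℝ) + 1) * ((i:ℝ) + 2)) := by
        apply div_le_div_of_nonneg_left (by positivity) (by positivity)
        nlinarith [Nat.cast_nonneg (α := ℝ) i]
      linarith
    have tele : ∑ i ∈ Finset.range n,
        ((fun j : ℕ => Real.pi / 2 / ((j:ℝ) + 1)) i
          - (fun j : ℕ => Real.pi / 2 / ((j:ℝ) + 1)) (i + 1))
        = Real.pi / 2 / ((0:ℝ) + 1) - Real.pi / 2 / ((n:ℝ) + 1) := by
      rw [Finset.sum_range_sub' (fun j : ℕ => Real.pi / 2 / ((j:ℝ) + 1)) n]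
      norm_num
    calc ∑ i ∈ Finset.range n, Real.Wallis.W i / (2 * (i:ℝ) + 1)
        ≤ ∑ i ∈ Finset.range n, (Real.pi / 4 * ((i:ℝ) + 1)⁻¹
            + ((fun j : ℕ => Real.pi / 2 / ((j:ℝ) + 1)) i
              - (fun j : ℕ => Real.pi / 2 / ((j:ℝ) + 1)) (i + 1))) :=
          Finset.sum_le_sum step
      _ = ∑ i ∈ Finset.range n, Real.pi / 4 * ((i:ℝ) + 1)⁻¹
            + (Real.pi / 2 / ((0:ℝ) + 1) - Real.pi / 2 / ((n:ℝ) + 1)) := by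
          rw [Finset.sum_add_distrib, tele]
      _ ≤ ∑ i ∈ Finset.range n, Real.pi / 4 * ((i:ℝ) + 1)⁻¹ + Real.pi / 2 := by
          have : (0:ℝ) ≤ Real.pi / 2 / ((n:ℝ) + 1) := by positivity
          have : Real.pi / 2 / ((0:ℝ) + 1) = Real.pi / 2 := by norm_num
          gcongr
          · rw [this]
            have : (0:ℝ) ≤ Real.pi / 2 / ((n:ℝ) + 1) := by positivity
            linarith
  -- limits
  have hlog : Tendsto (fun n : ℕ => Real.log n) atTop atTop :=
    Real.tendsto_log_atTop.comp tendsto_natCast_atTop_atTop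
  have hlog0 : Tendsto (fun n : ℕ => 1 / Real.log n) atTop (nhds 0) :=
    tendsto_const_nhds.div_atTop hlog
  have hh1 : Tendsto (fun n : ℕ => ((harmonic n : ℚ) : ℝ) / Real.log n) atTop (nhds 1) := by
    refine tendsto_of_tendsto_of_tendsto_of_le_of_le' (tendsto_const_nhds (x := (1:ℝ)))
      (by simpa using hlog0.const_add (1:ℝ)) ?_ ?_
    · filter_upwards [eventually_ge_atTop 2] with n hn
      have hL : 0 < Real.log n := Real.log_pos (by exact_mod_cast Nat.lt_of_lt_of_le one_lt_two hn)
      rw [le_div_iff₀ hL, one_mul]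
      calc Real.log n ≤ Real.log ((n:ℝ) + 1) := by
            apply Real.log_le_log (by positivity)
            linarith
        _ ≤ ((harmonic n : ℚ) : ℝ) := by
            have := log_add_one_le_harmonic n
            push_cast at this ⊢
            linarith
    · filter_upwards [eventually_ge_atTop 2] with n hn
      have hL : 0 < Real.log n := Real.log_pos (by exact_mod_cast Nat.lt_of_lt_of_le one_lt_two hn)
      rw [div_le_iff₀ hL]
      have h := harmonic_le_one_add_log n
      have e : (1 + (Real.log n)⁻¹) * Real.log n = Real.log n + 1 := by
        field_simp
      calc ((harmonic n : ℚ) : ℝ) ≤ Real.log n + 1 := by linarith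
        _ = (1 + (Real.log n)⁻¹) * Real.log n := e.symm
  have hmain_lo : Tendsto (fun n : ℕ => Real.pi / 4 * (((harmonic n : ℚ) : ℝ) / Real.log n))
      atTop (nhds (Real.pi / 4)) := by
    simpa using hh1.const_mul (Real.pi / 4)
  have hmain_hi : Tendsto (fun n : ℕ => Real.pi / 4 * (((harmonic n : ℚ) : ℝ) / Real.log n)
      + Real.pi / 2 * (1 / Real.log n)) atTop (nhds (Real.pi / 4)) := by
    simpa using hmain_lo.add (hlog0.const_mul (Real.pi / 2))
  refine tendsto_of_tendsto_of_tendsto_of_le_of_le' hmain_lo hmain_hi ?_ ?_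
  · filter_upwards [eventually_ge_atTop 2] with n hn
    have hL : 0 < Real.log n := Real.log_pos (by exact_mod_cast Nat.lt_of_lt_of_le one_lt_two hn)
    rw [mul_div_assoc']
    exact div_le_div_of_nonneg_right (hlow n) hL.le |>.trans_eq rfl
  · filter_upwards [eventually_ge_atTop 2] with n hn
    have hL : 0 < Real.log n := Real.log_pos (by exact_mod_cast Nat.lt_of_lt_of_le one_lt_two hn)
    have e : Real.pi / 4 * (((harmonic n : ℚ) : ℝ) / Real.log n)
        + Real.pi / 2 * (1 / Real.log n)
        = (Real.pi / 4 * ((harmonic n : ℚ) : ℝ) + Real.pi / 2) / Real.log n := by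
      field_simp
    rw [e]
    exact div_le_div_of_nonneg_right (hup n) hL.le
end

section
/- For the LRRW with α < 1/2, the strong law of large numbers holds: S_n/n converges almost surely to ω/(1−α). -/
open MeasureTheory ProbabilityTheory Filter Real Finset Topology

private lemma lrrw_sum_Icc_one (f : ℕ → ℝ) (m : ℕ) :
    ∑ k ∈ Finset.Icc 1 m, f k = ∑ j ∈ Finset.range m, f (j + 1) := by
  rw [← Finset.Ico_add_one_right_eq_Icc, Finset.sum_Ico_eq_sum_range]
  simp [add_comm]

private lemma lrrw_sum_Icc_succ (f : ℕ → ℝ) (m : ℕ) :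
    ∑ k ∈ Finset.Icc 1 (m + 1), f k = (∑ k ∈ Finset.Icc 1 m, f k) + f (m + 1) := by
  rw [lrrw_sum_Icc_one, lrrw_sum_Icc_one, Finset.sum_range_succ]

/-- telescoping bound : ∑_{k=1}^m 1/(k+1)^2 ≤ 1 -/
private lemma lrrw_sum_inv_sq (m : ℕ) :
    ∑ k ∈ Finset.Icc 1 m, (1 : ℝ) / ((k : ℝ) + 1) ^ 2 ≤ 1 - 1 / ((m : ℝ) + 1) := by
  induction m with
  | zero => simp
  | succ m ih =>
    rw [lrrw_sum_Icc_succ]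
    have h1 : (0:ℝ) < (m:ℝ) + 1 := by positivity
    have h2 : (0:ℝ) < (m:ℝ) + 1 + 1 := by positivity
    have key : (1 : ℝ) / ((m:ℝ) + 1 + 1) ^ 2 ≤ 1 / ((m:ℝ)+1) - 1 / ((m:ℝ)+1+1) := by
      rw [div_sub_div _ _ (ne_of_gt h1) (ne_of_gt h2), div_le_div_iff₀ (by positivity) (by positivity)]
      nlinarith [h1, h2]
    push_cast
    push_cast at ih
    linarith

section Pseq
variable {α : ℝ}

private noncomputable def lrrwP (α : ℝ) : ℕ → ℝ := fun m => ∏ j ∈ Finset.range m, (1 + α / (j + 1))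

private lemma lrrw_factor_pos (h1 : -1 < α) (h2 : α < 1) (j : ℕ) : 0 < 1 + α / ((j:ℝ) + 1) := by
  have hj : (1:ℝ) ≤ (j:ℝ) + 1 := by simp [Nat.cast_nonneg]
  have habs : |α / ((j:ℝ) + 1)| < 1 := by
    rw [abs_div, abs_of_pos (by positivity : (0:ℝ) < (j:ℝ)+1), div_lt_one (by positivity)]
    calc |α| < 1 := abs_lt.2 ⟨h1, h2⟩
    _ ≤ (j:ℝ) + 1 := hj
  have := (abs_lt.1 habs).1
  linarith

private lemma lrrwP_pos (h1 : -1 < α) (h2 : α < 1) (m : ℕ) : 0 < lrrwP α m :=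
  Finset.prod_pos fun j _ => lrrw_factor_pos h1 h2 j

private lemma lrrwP_succ (m : ℕ) : lrrwP α (m + 1) = lrrwP α m * (1 + α / (m + 1)) :=
  Finset.prod_range_succ _ _

private lemma lrrwP_le (h1 : -1 < α) (h2 : α < 1) (m : ℕ) :
    lrrwP α m ≤ Real.exp (|α| * (1 + Real.log m)) := by
  have step1 : lrrwP α m ≤ ∏ j ∈ Finset.range m, Real.exp (|α| / (j + 1)) := by
    refine Finset.prod_le_prod (fun j _ => (lrrw_factor_pos h1 h2 j).le) (fun j _ => ?_)
    calc (1 : ℝ) + α / (j + 1) ≤ 1 + |α| / (j+1) := by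
          gcongr; · exact le_abs_self α
    _ ≤ Real.exp (|α| / (j+1)) := by
          have := Real.add_one_le_exp (|α| / ((j:ℝ)+1)); linarith
  rw [← Real.exp_sum] at step1
  refine step1.trans (Real.exp_le_exp.2 ?_)
  have hsum : ∑ j ∈ Finset.range m, |α| / ((j:ℝ) + 1) = |α| * ∑ j ∈ Finset.range m, 1 / ((j:ℝ)+1) := by
    rw [Finset.mul_sum]; refine Finset.sum_congr rfl fun j _ => by ring
  rw [hsum]
  have hharm : ∑ j ∈ Finset.range m, 1 / ((j:ℝ)+1) ≤ 1 + Real.log m := by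
    have := harmonic_le_one_add_log m
    have hcast : ((harmonic m : ℚ) : ℝ) = ∑ j ∈ Finset.range m, 1 / ((j:ℝ)+1) := by
      rw [harmonic]; push_cast [one_div]; rfl
    rw [← hcast]
    exact this
  exact mul_le_mul_of_nonneg_left hharm (abs_nonneg α)

end Pseq

private lemma lrrw_kronecker (b : ℕ → ℝ) (hbpos : ∀ n, 0 < b n) (hbmono : Monotone b)
    (hbtop : Tendsto b atTop atTop) (x : ℕ → ℝ) (c : ℝ)
    (hx : Tendsto (fun n => ∑ k ∈ Finset.range n, x k / b k) atTop (𝓝 c)) :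
    Tendsto (fun n => (∑ k ∈ Finset.range n, x k) / b n) atTop (𝓝 0) := by
  set s : ℕ → ℝ := fun n => ∑ k ∈ Finset.range n, x k / b k with hs
  have habel : ∀ n : ℕ, ∑ k ∈ Finset.range n, x k
      = b (n - 1) * (s n - c)
        - (∑ i ∈ Finset.range (n - 1), (b (i + 1) - b i) * (s (i + 1) - c)) + c * b 0 := by
    intro n
    have h0 : ∑ k ∈ Finset.range n, x k = ∑ k ∈ Finset.range n, b k • (x k / b k) := by
      refine Finset.sum_congr rfl fun k _ => ?_
      rw [smul_eq_mul, mul_div_cancel₀ _ (hbpos k).ne']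
    rw [h0, Finset.sum_range_by_parts]
    have htel : ∑ i ∈ Finset.range (n - 1), (b (i + 1) - b i) = b (n - 1) - b 0 :=
      Finset.sum_range_sub b (n - 1)
    simp only [smul_eq_mul]
    have hsplit : ∑ i ∈ Finset.range (n - 1), (b (i + 1) - b i) * s (i + 1)
        = (∑ i ∈ Finset.range (n - 1), (b (i + 1) - b i) * (s (i + 1) - c))
          + c * (b (n - 1) - b 0) := by
      rw [← htel, Finset.mul_sum, ← Finset.sum_add_distrib]
      exact Finset.sum_congr rfl fun i _ => by ring
    rw [hsplit]
    ring
  -- Term B : b (n-1) * (s n - c) / b n → 0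
  have hsc : Tendsto (fun n => s n - c) atTop (𝓝 0) := by
    simpa using hx.sub (tendsto_const_nhds (x := c))
  have hB : Tendsto (fun n => b (n - 1) * (s n - c) / b n) atTop (𝓝 0) := by
    refine squeeze_zero_norm (fun n => ?_) (by simpa using hsc.norm)
    have h1 : b (n - 1) ≤ b n := hbmono (Nat.sub_le n 1)
    rw [norm_div, norm_mul, Real.norm_eq_abs (b (n-1)), Real.norm_eq_abs (b n),
      abs_of_pos (hbpos n), abs_of_pos (hbpos (n - 1)), Real.norm_eq_abs,
      div_le_iff₀ (hbpos n)]
    nlinarith [abs_nonneg (s n - c), hbpos (n - 1)]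
  -- Term A : weighted sums
  have hgnonneg : ∀ i, (0:ℝ) ≤ b (i + 1) - b i := fun i => sub_nonneg.2 (hbmono (Nat.le_succ i))
  have hlo : (fun i => (b (i + 1) - b i) * (s (i + 1) - c)) =o[atTop] fun i => b (i + 1) - b i := by
    have h1 : (fun i : ℕ => s (i + 1) - c) =o[atTop] (fun _ : ℕ => (1:ℝ)) :=
      (Asymptotics.isLittleO_one_iff ℝ).2 (hsc.comp (tendsto_add_atTop_nat 1))
    have h2 := h1.mul_isBigO (Asymptotics.isBigO_refl (fun i : ℕ => b (i + 1) - b i) atTop)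
    simpa [mul_comm, one_mul] using h2
  have hGstop : Tendsto (fun n => ∑ i ∈ Finset.range n, (b (i + 1) - b i)) atTop atTop := by
    simp_rw [Finset.sum_range_sub b]
    exact tendsto_atTop_add_const_right atTop (-b 0) (by simpa [sub_eq_add_neg] using hbtop) |>.congr (fun n => by ring)
  have hsumlo := hlo.sum_range hgnonneg hGstop
  simp_rw [Finset.sum_range_sub b] at hsumlo
  have hbigO : (fun n => b n - b 0) =O[atTop] b := by
    refine Asymptotics.isBigO_iff.2 ⟨1, Filter.Eventually.of_forall fun n => ?_⟩
    rw [one_mul, Real.norm_eq_abs, Real.norm_eq_abs, abs_of_pos (hbpos n),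
      abs_of_nonneg (sub_nonneg.2 (hbmono (Nat.zero_le n)))]
    linarith [hbpos 0]
  have hA0 : Tendsto (fun n => (∑ i ∈ Finset.range n, (b (i + 1) - b i) * (s (i + 1) - c)) / b n)
      atTop (𝓝 0) := (hsumlo.trans_isBigO hbigO).tendsto_div_nhds_zero
  have hA : Tendsto (fun n => (∑ i ∈ Finset.range (n - 1), (b (i + 1) - b i) * (s (i + 1) - c)) / b n)
      atTop (𝓝 0) := by
    have hA0' : Tendsto (fun n => (∑ i ∈ Finset.range (n - 1), (b (i + 1) - b i) * (s (i + 1) - c)) / b (n - 1)) atTop (𝓝 0) :=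
      hA0.comp (tendsto_sub_atTop_nat 1)
    refine squeeze_zero_norm (fun n => ?_) (by simpa using hA0'.norm)
    have h1 : b (n - 1) ≤ b n := hbmono (Nat.sub_le n 1)
    simp only [Real.norm_eq_abs, abs_div]
    rw [abs_of_pos (hbpos n), abs_of_pos (hbpos (n - 1))]
    gcongr
    exact hbpos (n - 1)
  have hC : Tendsto (fun n => c * b 0 / b n) atTop (𝓝 0) :=
    Tendsto.div_atTop tendsto_const_nhds hbtop
  have := (hB.sub hA).add hC
  rw [show (0:ℝ) - 0 + 0 = 0 by ring] at this
  refine this.congr fun n => ?_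
  rw [habel n]
  ring

private noncomputable def lrrwU (α : ℝ) (n : ℕ) : ℝ := n / lrrwP α (n - 1)

private lemma lrrwU_pos {α : ℝ} (h1 : -1 < α) (h2 : α < 1) {n : ℕ} (hn : 1 ≤ n) :
    0 < lrrwU α n :=
  div_pos (by exact_mod_cast Nat.lt_of_lt_of_le Nat.zero_lt_one hn) (lrrwP_pos h1 h2 _)

private lemma lrrwU_mono {α : ℝ} (h1 : -1 < α) (h2 : α < 1) {m : ℕ} (hm : 1 ≤ m) :
    lrrwU α m ≤ lrrwU α (m + 1) := by
  obtain ⟨k, rfl⟩ := Nat.exists_eq_add_of_le hm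
  have hP := lrrwP_pos h1 h2 k
  have hf := lrrw_factor_pos h1 h2 k
  have hs : lrrwP α (k + 1) = lrrwP α k * (1 + α / (k + 1)) := lrrwP_succ k
  show ((1 + k : ℕ) : ℝ) / lrrwP α ((1 + k) - 1) ≤ ((1 + k + 1 : ℕ) : ℝ) / lrrwP α ((1 + k + 1) - 1)
  have e1 : (1 + k) - 1 = k := by omega
  have e2 : (1 + k + 1) - 1 = k + 1 := by omega
  rw [e1, e2, hs, div_le_div_iff₀ hP (by positivity)]
  push_cast
  have hcast : (0:ℝ) ≤ (k:ℝ) := Nat.cast_nonneg k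
  have hne : ((k:ℝ) + 1) ≠ 0 := by positivity
  have : (1 + (k:ℝ)) * (1 + α / ((k:ℝ) + 1)) = 1 + (k:ℝ) + α := by field_simp; ring
  nlinarith [hP, h2, hcast]

private lemma lrrwU_tendsto {α : ℝ} (h1 : -1 < α) (h2 : α < 1) :
    Tendsto (lrrwU α) atTop atTop := by
  have hexp : (0:ℝ) < Real.exp (-|α|) := Real.exp_pos _
  have habs : |α| < 1 := abs_lt.2 ⟨h1, h2⟩
  have hpow : Tendsto (fun n : ℕ => (n:ℝ) ^ ((1:ℝ) - |α|)) atTop atTop :=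
    (tendsto_rpow_atTop (by linarith)).comp tendsto_natCast_atTop_atTop
  have hℓ : Tendsto (fun n : ℕ => Real.exp (-|α|) * (n:ℝ) ^ ((1:ℝ) - |α|)) atTop atTop :=
    hpow.const_mul_atTop hexp
  refine tendsto_atTop_mono' atTop ?_ hℓ
  filter_upwards [Filter.eventually_ge_atTop 1] with n hn
  have hnpos : (0:ℝ) < (n:ℝ) := by exact_mod_cast hn
  have hP := lrrwP_pos h1 h2 (n - 1)
  have hlog : Real.log ((n - 1 : ℕ) : ℝ) ≤ Real.log (n : ℝ) := by
    rcases Nat.eq_zero_or_pos (n - 1) with h | h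
    · rw [h]; simpa using Real.log_nonneg (by exact_mod_cast hn)
    · exact Real.log_le_log (by exact_mod_cast h) (by exact_mod_cast Nat.sub_le n 1)
  have hPle : lrrwP α (n - 1) ≤ Real.exp |α| * (n:ℝ) ^ (|α|) := by
    refine (lrrwP_le h1 h2 (n-1)).trans ?_
    have : Real.exp (|α| * (1 + Real.log n)) = Real.exp |α| * (n:ℝ) ^ (|α|) := by
      rw [mul_add, Real.exp_add, mul_one, Real.rpow_def_of_pos hnpos, mul_comm (Real.log _)]
    rw [← this]
    exact Real.exp_le_exp.2 (by nlinarith [abs_nonneg α])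
  have key : Real.exp (-|α|) * (n:ℝ) ^ ((1:ℝ) - |α|) ≤ lrrwU α n := by
    have e1 : Real.exp (-|α|) * (n:ℝ) ^ ((1:ℝ) - |α|) = (n:ℝ) / (Real.exp |α| * (n:ℝ) ^ (|α|)) := by
      rw [Real.rpow_sub hnpos, Real.rpow_one, Real.exp_neg]
      field_simp
    rw [e1]
    exact div_le_div_of_nonneg_left hnpos.le (lrrwP_pos h1 h2 _) hPle |>.trans_eq rfl
  exact key

set_option maxHeartbeats 2000000 in
theorem lrrw_slln_diffusive
    {Ω : Type*} [MeasurableSpace Ω] (μ : Measure Ω) [IsProbabilityMeasure μ]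
    (p q r θ : ℝ) (hp : 0 ≤ p) (hq : 0 ≤ q) (hr : 0 ≤ r) (hpqr : p + q + r = 1)
    (hθ0 : 0 ≤ θ) (hθ1 : θ < 1)
    (X : ℕ → Ω → ℝ) (hXmeas : ∀ n, StronglyMeasurable (X n))
    (hXval : ∀ n ω, X n ω = 1 ∨ X n ω = -1 ∨ X n ω = 0)
    (hX0 : ∀ ω, X 0 ω = 0)
    (S : ℕ → Ω → ℝ) (hS : ∀ n ω, S n ω = ∑ k ∈ Finset.Icc 1 n, X k ω)
    (Np Nm : ℕ → Ω → ℝ)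
    (hNp : ∀ n ω, Np n ω = ∑ k ∈ Finset.Icc 1 n, if X k ω = 1 then (1 : ℝ) else 0)
    (hNm : ∀ n ω, Nm n ω = ∑ k ∈ Finset.Icc 1 n, if X k ω = -1 then (1 : ℝ) else 0)
    (hinit1 : μ {ω | X 1 ω = 1} = ENNReal.ofReal p)
    (hinit2 : μ {ω | X 1 ω = -1} = ENNReal.ofReal q)
    (hcond1 : ∀ n : ℕ, 1 ≤ n →
      μ[Set.indicator {ω | X (n + 1) ω = 1} (fun _ => (1 : ℝ)) |
          (MeasureTheory.Filtration.natural X hXmeas) n]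
        =ᵐ[μ] fun ω => (1 - θ) * p + θ * (p * Np n ω + q * Nm n ω) / n)
    (hcond2 : ∀ n : ℕ, 1 ≤ n →
      μ[Set.indicator {ω | X (n + 1) ω = -1} (fun _ => (1 : ℝ)) |
          (MeasureTheory.Filtration.natural X hXmeas) n]
        =ᵐ[μ] fun ω => (1 - θ) * q + θ * (q * Np n ω + p * Nm n ω) / n)
    (hα : θ * (p - q) < 1 / 2) :
    ∀ᵐ ω ∂μ, Tendsto (fun n : ℕ => S n ω / n) atTop
      (nhds ((p - q) * (1 - θ) / (1 - θ * (p - q)))) := by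
  classical
  set F := MeasureTheory.Filtration.natural X hXmeas with hF
  clear_value F
  set α := θ * (p - q) with hαdef
  clear_value α
  set w := (1 - θ) * (p - q) with hwdef
  clear_value w
  have hp1 : p ≤ 1 := by linarith
  have hq1 : q ≤ 1 := by linarith
  have hα2 : α < 1 := lt_of_lt_of_le hα (by norm_num)
  have hα1 : -1 < α := by rw [hαdef]; nlinarith
  have h1α : (0:ℝ) < 1 - α := by linarith
  set L := w / (1 - α) with hLdef
  clear_value L
  have hLw : L * (1 - α) = w := by rw [hLdef]; exact div_mul_cancel₀ _ h1α.ne'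
  -- boundedness
  have hXb : ∀ n ω, |X n ω| ≤ 1 := by
    intro n ω; rcases hXval n ω with h|h|h <;> rw [h] <;> norm_num
  have hSb : ∀ n ω, |S n ω| ≤ n := by
    intro n ω; rw [hS]
    calc |∑ k ∈ Finset.Icc 1 n, X k ω| ≤ ∑ k ∈ Finset.Icc 1 n, |X k ω| :=
          Finset.abs_sum_le_sum_abs _ _
    _ ≤ ∑ k ∈ Finset.Icc 1 n, 1 := Finset.sum_le_sum (fun k _ => hXb k ω)
    _ = ((Finset.Icc 1 n).card : ℝ) := by simp
    _ = n := by rw [Nat.card_Icc]; simp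
  -- measurability and integrability
  have hint_of_bdd : ∀ (f : Ω → ℝ) (c : ℝ), StronglyMeasurable f → (∀ ω, |f ω| ≤ c) →
      Integrable f μ := by
    intro f c hm hb
    exact ⟨hm.aestronglyMeasurable,
      HasFiniteIntegral.of_bounded (C := c) (Filter.Eventually.of_forall (fun ω => by
        simpa [Real.norm_eq_abs] using hb ω))⟩
  have hSmeas : ∀ n, StronglyMeasurable (S n) := by
    intro n
    have : S n = fun ω => ∑ k ∈ Finset.Icc 1 n, X k ω := funext (hS n)
    rw [this]; exact Finset.stronglyMeasurable_fun_sum _ (fun k _ => hXmeas k)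
  have hXadp : ∀ n, StronglyMeasurable[F n] (X n) := by
    rw [hF]; exact fun n => Filtration.stronglyAdapted_natural hXmeas n
  have hSadp : ∀ n, StronglyMeasurable[F n] (S n) := by
    intro n
    have : S n = fun ω => ∑ k ∈ Finset.Icc 1 n, X k ω := funext (hS n)
    rw [this]
    exact Finset.stronglyMeasurable_fun_sum _
      (fun k hk => (hXadp k).mono (F.mono (Finset.mem_Icc.1 hk).2))
  have hXint : ∀ n, Integrable (X n) μ := fun n => hint_of_bdd _ 1 (hXmeas n) (hXb n)
  have hSint : ∀ n, Integrable (S n) μ := fun n => hint_of_bdd _ n (hSmeas n) (hSb n)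
  -- increments
  set C : ℝ := 1 + |w| + |α| with hCdef
  clear_value C
  set D : ℕ → Ω → ℝ := fun n ω => X (n + 1) ω - w - α / n * S n ω with hDdef
  clear_value D
  have hDmeasF : ∀ n, StronglyMeasurable[F (n+1)] (D n) := by
    intro n
    simp only [hDdef]
    exact ((hXadp (n+1)).sub stronglyMeasurable_const).sub
      (((hSadp n).mono (F.mono (Nat.le_succ n))).const_mul _)
  have hDmeas : ∀ n, StronglyMeasurable (D n) := fun n => (hDmeasF n).mono (F.le (n+1))
  have hC0 : 0 < C := by rw [hCdef]; positivity
  have hDb : ∀ n ω, |D n ω| ≤ C := by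
    intro n ω
    rw [hDdef]
    have h3 : |α / n * S n ω| ≤ |α| := by
      rcases Nat.eq_zero_or_pos n with rfl | hn
      · simp
      · have hnpos : (0:ℝ) < n := by exact_mod_cast hn
        rw [abs_mul, abs_div, abs_of_pos hnpos]
        have h0 : (0:ℝ) ≤ |α| / n := by positivity
        have h4 := mul_le_mul_of_nonneg_left (hSb n ω) h0
        have h5 : |α| / (n:ℝ) * (n:ℝ) = |α| := div_mul_cancel₀ _ hnpos.ne'
        linarith
    have h1 : |X (n+1) ω - w - α / n * S n ω| ≤ |X (n+1) ω| + |w| + |α / n * S n ω| := by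
      rw [sub_eq_add_neg, sub_eq_add_neg]
      refine (abs_add_three _ _ _).trans ?_
      simp [abs_neg]
    calc |X (n + 1) ω - w - α / n * S n ω| ≤ |X (n+1) ω| + |w| + |α / n * S n ω| := h1
    _ ≤ 1 + |w| + |α| := add_le_add (add_le_add (hXb _ ω) le_rfl) h3
    _ = C := hCdef.symm
  have hDint : ∀ n, Integrable (D n) μ := fun n => hint_of_bdd _ C (hDmeas n) (hDb n)
  -- conditional expectation of the increments
  have hNpNm : ∀ n ω, Np n ω - Nm n ω = S n ω := by
    intro n ω; rw [hNp, hNm, hS, ← Finset.sum_sub_distrib]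
    refine Finset.sum_congr rfl fun k _ => ?_
    rcases hXval k ω with h|h|h <;> norm_num [h]
  have hDcond : ∀ n, 1 ≤ n → μ[D n | F n] =ᵐ[μ] 0 := by
    intro n hn
    have hnR : (0:ℝ) < n := by exact_mod_cast hn
    set f1 : Ω → ℝ := Set.indicator {ω | X (n + 1) ω = 1} (fun _ => (1:ℝ)) with hf1
    set f2 : Ω → ℝ := Set.indicator {ω | X (n + 1) ω = -1} (fun _ => (1:ℝ)) with hf2
    have hs1 : MeasurableSet {ω | X (n + 1) ω = 1} :=
      (hXmeas (n+1)).measurable (measurableSet_singleton 1)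
    have hs2 : MeasurableSet {ω | X (n + 1) ω = -1} :=
      (hXmeas (n+1)).measurable (measurableSet_singleton (-1))
    have hif1 : Integrable f1 μ := (integrable_const (1:ℝ)).indicator hs1
    have hif2 : Integrable f2 μ := (integrable_const (1:ℝ)).indicator hs2
    have hXdecomp : X (n+1) = f1 - f2 := by
      funext ω
      simp only [hf1, hf2, Pi.sub_apply, Set.indicator_apply, Set.mem_setOf_eq]
      rcases hXval (n+1) ω with h|h|h <;> norm_num [h]
    have hcX : μ[X (n+1) | F n] =ᵐ[μ] fun ω => w + α / n * S n ω := by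
      have hsub : μ[X (n+1) | F n] =ᵐ[μ] μ[f1|F n] - μ[f2|F n] := by
        rw [hXdecomp]; exact condExp_sub hif1 hif2 _
      refine hsub.trans ?_
      filter_upwards [hcond1 n hn, hcond2 n hn] with ω e1 e2
      simp only [Pi.sub_apply]
      rw [e1, e2, ← hNpNm n ω, hwdef, hαdef]
      field_simp
      ring
    have hg : (fun ω => w + α / n * S n ω) = fun ω => w + α / n * S n ω := rfl
    have hgmeas : StronglyMeasurable[F n] (fun ω => w + α / n * S n ω) :=
      stronglyMeasurable_const.add ((hSadp n).const_mul _)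
    have hgint : Integrable (fun ω => w + α / n * S n ω) μ := by
      refine hint_of_bdd _ (|w| + |α|) (stronglyMeasurable_const.add ((hSmeas n).const_mul _)) ?_
      intro ω
      have h3 : |α / n * S n ω| ≤ |α| := by
        rw [abs_mul, abs_div, abs_of_pos hnR]
        have h0 : (0:ℝ) ≤ |α| / n := by positivity
        have h4 := mul_le_mul_of_nonneg_left (hSb n ω) h0
        have h5 : |α| / (n:ℝ) * (n:ℝ) = |α| := div_mul_cancel₀ _ hnR.ne'
        linarith
      refine (abs_add_le _ _).trans ?_
      linarith
    have hDeq : D n = X (n+1) - (fun ω => w + α / n * S n ω) := by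
      funext ω; simp only [hDdef, Pi.sub_apply]; ring
    have hcg : μ[(fun ω => w + α / n * S n ω)|F n] = fun ω => w + α / n * S n ω :=
      condExp_of_stronglyMeasurable (F.le n) hgmeas hgint
    calc μ[D n|F n] =ᵐ[μ] μ[X (n+1)|F n] - μ[(fun ω => w + α / n * S n ω)|F n] := by
          rw [hDeq]; exact condExp_sub (hXint (n+1)) hgint _
    _ =ᵐ[μ] (fun ω => w + α / n * S n ω) - (fun ω => w + α / n * S n ω) := by
          rw [hcg]; exact hcX.sub (EventuallyEq.rfl)
    _ = 0 := by simp
  -- the martingale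
  set G : Filtration ℕ ‹MeasurableSpace Ω› :=
    ⟨fun n => F (n + 1), fun i j hij => F.mono (by omega), fun n => F.le (n + 1)⟩ with hG
  have hGn : ∀ n, G n = F (n + 1) := fun _ => rfl
  clear_value G
  set Q : ℕ → Ω → ℝ := fun m ω => ∑ k ∈ Finset.Icc 1 m, D k ω / ((k : ℝ) + α) with hQdef
  clear_value Q
  have hkα : ∀ k : ℕ, 1 ≤ k → (0:ℝ) < (k:ℝ) + α := by
    intro k hk
    have : (1:ℝ) ≤ (k:ℝ) := by exact_mod_cast hk
    linarith
  have hQmeasF : ∀ m, StronglyMeasurable[F (m+1)] (Q m) := by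
    intro m
    simp only [hQdef]
    refine Finset.stronglyMeasurable_fun_sum _ (fun k hk => ?_)
    have hk2 := (Finset.mem_Icc.1 hk).2
    have hmul := ((hDmeasF k).mono (F.mono (by omega : k + 1 ≤ m + 1))).mul
      (stronglyMeasurable_const (b := (((k:ℝ) + α)⁻¹)))
    simp only [div_eq_mul_inv]; exact hmul
  have hQb : ∀ m ω, |Q m ω| ≤ ∑ k ∈ Finset.Icc 1 m, C / ((k:ℝ) + α) := by
    intro m ω
    rw [hQdef]
    calc |∑ k ∈ Finset.Icc 1 m, D k ω / ((k:ℝ) + α)| ≤ ∑ k ∈ Finset.Icc 1 m, |D k ω / ((k:ℝ) + α)| :=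
          Finset.abs_sum_le_sum_abs _ _
    _ ≤ ∑ k ∈ Finset.Icc 1 m, C / ((k:ℝ) + α) := by
        refine Finset.sum_le_sum fun k hk => ?_
        have hk1 := (Finset.mem_Icc.1 hk).1
        rw [abs_div, abs_of_pos (hkα k hk1)]
        exact (div_le_div_iff_of_pos_right (hkα k hk1)).2 (hDb k ω)
    _ = _ := rfl
  have hQint : ∀ m, Integrable (Q m) μ := fun m =>
    hint_of_bdd _ _ ((hQmeasF m).mono (F.le (m+1))) (hQb m)
  have hQmart : Martingale Q G μ := by
    have hQadp : StronglyAdapted G Q := fun m => (hGn m) ▸ hQmeasF m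
    refine martingale_of_condExp_sub_eq_zero_nat hQadp hQint ?_
    intro i
    have hstep : Q (i+1) - Q i = fun ω => (((i:ℝ) + 1 + α)⁻¹) • D (i+1) ω := by
      funext ω
      simp only [Pi.sub_apply, hQdef]
      rw [lrrw_sum_Icc_succ (fun k => D k ω / ((k:ℝ) + α)) i]
      push_cast
      rw [smul_eq_mul]
      ring
    rw [hstep, hGn i]
    have hsm := condExp_smul (μ := μ) (m := F (i+1)) (((i:ℝ) + 1 + α)⁻¹) (D (i+1))
    refine EventuallyEq.trans hsm ?_
    filter_upwards [hDcond (i+1) (by omega)] with ω hω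
    simp only [Pi.smul_apply, Pi.zero_apply] at hω ⊢
    rw [hω, smul_zero]
  -- L² bound and L¹ bound
  have hprod_int : ∀ j k, Integrable (fun ω => D j ω * D k ω) μ := fun j k =>
    hint_of_bdd _ (C * C) ((hDmeas j).mul (hDmeas k)) (fun ω => by
      rw [abs_mul]
      exact mul_le_mul (hDb j ω) (hDb k ω) (abs_nonneg _) hC0.le)
  have hortho : ∀ j k, 1 ≤ j → j < k → ∫ ω, D j ω * D k ω ∂μ = 0 := by
    intro j k hj hjk
    have hmeasjk : StronglyMeasurable[F k] (D j) := (hDmeasF j).mono (F.mono (by omega))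
    have hmul : μ[(fun ω => D j ω * D k ω)|F k] =ᵐ[μ] fun ω => D j ω * (μ[D k | F k]) ω :=
      condExp_mul_of_stronglyMeasurable_left hmeasjk (hprod_int j k) (hDint k)
    have hzero : (fun ω => D j ω * (μ[D k|F k]) ω) =ᵐ[μ] 0 := by
      filter_upwards [hDcond k (by omega)] with ω hω
      simp only [Pi.zero_apply] at hω ⊢
      rw [hω, mul_zero]
    calc ∫ ω, D j ω * D k ω ∂μ
        = ∫ ω, (μ[(fun ω => D j ω * D k ω)|F k]) ω ∂μ :=
          (integral_condExp (F.le k)).symm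
    _ = ∫ ω, (0:Ω → ℝ) ω ∂μ := integral_congr_ae (hmul.trans hzero)
    _ = 0 := by simp
  have hoffdiag : ∀ j k, 1 ≤ j → 1 ≤ k → j ≠ k → ∫ ω, D j ω * D k ω ∂μ = 0 := by
    intro j k hj hk hne
    rcases lt_or_gt_of_ne hne with h | h
    · exact hortho j k hj h
    · rw [← hortho k j hk h]
      exact integral_congr_ae (Filter.Eventually.of_forall fun ω => mul_comm _ _)
  have hDsq : ∀ k, ∫ ω, D k ω * D k ω ∂μ ≤ C^2 := by
    intro k
    have hpt : ∀ ω, D k ω * D k ω ≤ C^2 := fun ω => by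
      nlinarith [hDb k ω, abs_nonneg (D k ω), neg_abs_le (D k ω), le_abs_self (D k ω)]
    calc ∫ ω, D k ω * D k ω ∂μ ≤ ∫ _ω, C^2 ∂μ :=
          integral_mono (hprod_int k k) (integrable_const _) hpt
    _ = C^2 := by rw [integral_const]; simp
  have hkα2 : ∀ k : ℕ, 1 ≤ k → (1+α)/2 * ((k:ℝ)+1) ≤ (k:ℝ) + α := by
    intro k hk
    have h1 : (1:ℝ) ≤ (k:ℝ) := by exact_mod_cast hk
    nlinarith
  have hQsq : ∀ m, ∫ ω, Q m ω ^ 2 ∂μ ≤ 4 * C^2 / (1+α)^2 := by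
    intro m
    have hsq : ∀ ω, Q m ω ^ 2 = ∑ j ∈ Finset.Icc 1 m, ∑ k ∈ Finset.Icc 1 m,
        (1/(((j:ℝ)+α)*((k:ℝ)+α))) * (D j ω * D k ω) := by
      intro ω
      simp only [hQdef]
      rw [sq, Finset.sum_mul_sum]
      refine Finset.sum_congr rfl fun j hj => Finset.sum_congr rfl fun k hk => ?_
      have h1 := (hkα j (Finset.mem_Icc.1 hj).1).ne'
      have h2 := (hkα k (Finset.mem_Icc.1 hk).1).ne'
      field_simp
    have hstep1 : ∫ ω, Q m ω ^ 2 ∂μ = ∑ j ∈ Finset.Icc 1 m, ∑ k ∈ Finset.Icc 1 m,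
        (1/(((j:ℝ)+α)*((k:ℝ)+α))) * ∫ ω, D j ω * D k ω ∂μ := by
      rw [integral_congr_ae (Filter.Eventually.of_forall hsq)]
      rw [integral_finset_sum _ (fun j _ =>
        integrable_finset_sum _ (fun k _ => (hprod_int j k).const_mul _))]
      refine Finset.sum_congr rfl fun j _ => ?_
      rw [integral_finset_sum _ (fun k _ => (hprod_int j k).const_mul _)]
      exact Finset.sum_congr rfl fun k _ => integral_const_mul _ _
    rw [hstep1]
    have hdiag : ∀ j ∈ Finset.Icc 1 m, ∑ k ∈ Finset.Icc 1 m,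
        (1/(((j:ℝ)+α)*((k:ℝ)+α))) * ∫ ω, D j ω * D k ω ∂μ
        = (1/(((j:ℝ)+α)*((j:ℝ)+α))) * ∫ ω, D j ω * D j ω ∂μ := by
      intro j hj
      refine Finset.sum_eq_single j (fun k hk hne => ?_) (fun h => absurd hj h)
      rw [hoffdiag j k (Finset.mem_Icc.1 hj).1 (Finset.mem_Icc.1 hk).1 (Ne.symm hne), mul_zero]
    rw [Finset.sum_congr rfl hdiag]
    have hbd : ∀ j ∈ Finset.Icc 1 m, (1/(((j:ℝ)+α)*((j:ℝ)+α))) * ∫ ω, D j ω * D j ω ∂μ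
        ≤ (4 * C^2 / (1+α)^2) * (1 / ((j:ℝ)+1)^2) := by
      intro j hj
      have hj1 := (Finset.mem_Icc.1 hj).1
      have hjα := hkα (j) hj1
      have hj2 := hkα2 j hj1
      have hj3 : (0:ℝ) < (j:ℝ) + 1 := by positivity
      have h1a : (0:ℝ) < 1 + α := by linarith
      have hnum : (0:ℝ) ≤ ∫ ω, D j ω * D j ω ∂μ := by
        refine integral_nonneg fun ω => mul_self_nonneg _
      have hfrac : (1/(((j:ℝ)+α)*((j:ℝ)+α))) ≤ 4 / ((1+α)^2 * ((j:ℝ)+1)^2) := by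
        have hpos2 : (0:ℝ) ≤ (1+α)/2 * ((j:ℝ)+1) := by positivity
        have hsq2 := mul_le_mul hj2 hj2 hpos2 (le_trans hpos2 hj2)
        rw [div_le_div_iff₀ (by positivity) (by positivity)]
        nlinarith [hsq2]
      calc (1/(((j:ℝ)+α)*((j:ℝ)+α))) * ∫ ω, D j ω * D j ω ∂μ
          ≤ (4 / ((1+α)^2 * ((j:ℝ)+1)^2)) * C^2 := by
            refine mul_le_mul hfrac (hDsq j) hnum (by positivity)
      _ = (4 * C^2 / (1+α)^2) * (1 / ((j:ℝ)+1)^2) := by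
            field_simp
    calc ∑ j ∈ Finset.Icc 1 m, (1/(((j:ℝ)+α)*((j:ℝ)+α))) * ∫ ω, D j ω * D j ω ∂μ
        ≤ ∑ j ∈ Finset.Icc 1 m, (4 * C^2 / (1+α)^2) * (1 / ((j:ℝ)+1)^2) :=
          Finset.sum_le_sum hbd
    _ = (4 * C^2 / (1+α)^2) * ∑ j ∈ Finset.Icc 1 m, (1 / ((j:ℝ)+1)^2) := by
          rw [Finset.mul_sum]
    _ ≤ (4 * C^2 / (1+α)^2) * 1 := by
          refine mul_le_mul_of_nonneg_left ?_ (by positivity)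
          refine (lrrw_sum_inv_sq m).trans ?_
          have : (0:ℝ) ≤ 1 / ((m:ℝ)+1) := by positivity
          linarith
    _ = 4 * C^2 / (1+α)^2 := mul_one _
  set K : ℝ := (4 * C^2 / (1+α)^2 + 1) / 2 with hKdef
  clear_value K
  have hQsq_int : ∀ m, Integrable (fun ω => Q m ω ^ 2) μ := by
    intro m
    have hQm := (hQmeasF m).mono (F.le (m+1))
    have hfe : (fun ω => Q m ω ^ 2) = Q m * Q m := by funext ω; simp [sq]
    refine hint_of_bdd _ ((∑ k ∈ Finset.Icc 1 m, C / ((k:ℝ) + α))^2) ?_ ?_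
    · rw [hfe]; exact hQm.mul hQm
    · intro ω
      rw [abs_pow]
      have h0 : (0:ℝ) ≤ |Q m ω| := abs_nonneg _
      have h1 := hQb m ω
      exact pow_le_pow_left₀ h0 h1 2
  have hQl1 : ∀ m, eLpNorm (Q m) 1 μ ≤ K.toNNReal := by
    intro m
    have habs : ∫ ω, ‖Q m ω‖ ∂μ ≤ K := by
      have hpt : ∀ ω, ‖Q m ω‖ ≤ (Q m ω ^ 2 + 1) / 2 := by
        intro ω
        rw [Real.norm_eq_abs]
        nlinarith [sq_nonneg (|Q m ω| - 1), sq_abs (Q m ω)]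
      calc ∫ ω, ‖Q m ω‖ ∂μ ≤ ∫ ω, (Q m ω ^ 2 + 1) / 2 ∂μ :=
            integral_mono (hQint m).norm (((hQsq_int m).add (integrable_const 1)).div_const 2) hpt
      _ = ((∫ ω, Q m ω ^ 2 ∂μ) + 1) / 2 := by
            rw [integral_div, integral_add (hQsq_int m) (integrable_const 1), integral_const]
            simp
      _ ≤ K := by rw [hKdef]; linarith [hQsq m]
    have heq : eLpNorm (Q m) 1 μ = ENNReal.ofReal (∫ ω, ‖Q m ω‖ ∂μ) := by
      rw [eLpNorm_one_eq_lintegral_enorm, ← ofReal_integral_norm_eq_lintegral_enorm (hQint m)]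
    rw [heq]
    exact ENNReal.ofReal_le_ofReal habs
  have hconv : ∀ᵐ ω ∂μ, ∃ c, Tendsto (fun m => Q m ω) atTop (𝓝 c) :=
    hQmart.submartingale.exists_ae_tendsto_of_bdd hQl1
  -- pointwise conclusion
  filter_upwards [hconv] with ω hω
  obtain ⟨c, hc⟩ := hω
  -- deterministic sequences
  set A : ℕ → ℝ := fun n => lrrwP α (n - 1) with hAdef
  clear_value A
  set b : ℕ → ℝ := fun j => lrrwU α (j + 1) with hbdef
  clear_value b
  set x : ℕ → ℝ := fun j => D (j + 1) ω / A (j + 2) with hxdef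
  clear_value x
  have hApos : ∀ n, 0 < A n := fun n => by rw [hAdef]; exact lrrwP_pos hα1 hα2 _
  have hbpos : ∀ j, 0 < b j := fun j => by rw [hbdef]; exact lrrwU_pos hα1 hα2 (by omega)
  have hbmono : Monotone b := by
    rw [hbdef]
    exact monotone_nat_of_le_succ (fun j => lrrwU_mono hα1 hα2 (by omega))
  have hbtop : Tendsto b atTop atTop := by
    rw [hbdef]
    exact (lrrwU_tendsto hα1 hα2).comp (tendsto_add_atTop_nat 1)
  have hA1 : A 1 = 1 := by rw [hAdef]; simp [lrrwP]
  have hAsucc : ∀ j : ℕ, A (j + 2) = A (j + 1) * (1 + α / ((j:ℝ) + 1)) := by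
    intro j
    rw [hAdef]
    show lrrwP α (j + 2 - 1) = lrrwP α (j + 1 - 1) * _
    have e1 : j + 2 - 1 = j + 1 := by omega
    have e2 : j + 1 - 1 = j := by omega
    rw [e1, e2]
    exact lrrwP_succ j
  have hxb : ∀ j : ℕ, x j / b j = D (j + 1) ω / (((j:ℝ) + 1) + α) := by
    intro j
    have hu : b j = ((j:ℝ) + 1) / lrrwP α j := by
      rw [hbdef]
      show ((j + 1 : ℕ) : ℝ) / lrrwP α (j + 1 - 1) = _
      have e2 : j + 1 - 1 = j := by omega
      rw [e2]; push_cast; ring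
    have hA2 : A (j + 2) = lrrwP α j * (1 + α / ((j:ℝ) + 1)) := by
      have := hAsucc j
      rw [hAdef] at this ⊢
      show lrrwP α (j + 2 - 1) = _
      have e1 : j + 2 - 1 = j + 1 := by omega
      rw [e1, lrrwP_succ j]
    have hP := (lrrwP_pos hα1 hα2 j).ne'
    have hfac := (lrrw_factor_pos hα1 hα2 j).ne'
    have hj1 : ((j:ℝ) + 1) ≠ 0 := by positivity
    have hjα : ((j:ℝ) + 1) + α ≠ 0 := by
      have := hkα (j + 1) (by omega); push_cast at this; linarith
    simp only [hxdef]
    rw [hA2, hu]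
    have h9 : ((j:ℝ) + 1) + α = (1 + α / ((j:ℝ) + 1)) * ((j:ℝ) + 1) := by
      field_simp
    rw [h9]
    field_simp
  have hQx : ∀ m, Q m ω = ∑ j ∈ Finset.range m, x j / b j := by
    intro m
    simp only [hQdef]
    rw [lrrw_sum_Icc_one (fun k => D k ω / ((k:ℝ) + α)) m]
    refine Finset.sum_congr rfl fun j _ => ?_
    rw [hxb j]
    push_cast
    ring_nf
  have hkron : Tendsto (fun n => (∑ j ∈ Finset.range n, x j) / b n) atTop (𝓝 0) :=
    lrrw_kronecker b hbpos hbmono hbtop x c (hc.congr hQx)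
  -- the pathwise identity
  have hT : ∀ n, 1 ≤ n → (S n ω - L * ((n:ℝ) - A n)) / A n
      = X 1 ω + ∑ j ∈ Finset.range (n - 1), x j := by
    intro n hn
    induction n, hn using Nat.le_induction with
    | base =>
      have hS1 : S 1 ω = X 1 ω := by rw [hS]; simp
      rw [hA1, hS1]
      simp
    | succ n hn ih =>
      obtain ⟨m, rfl⟩ : ∃ m, n = m + 1 := ⟨n - 1, (Nat.succ_pred_eq_of_pos hn).symm⟩
      simp only [Nat.add_sub_cancel] at ih ⊢
      rw [Finset.sum_range_succ, ← add_assoc, ← ih]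
      have hSrec : S (m + 2) ω = S (m + 1) ω + X (m + 2) ω := by
        rw [hS, hS]
        exact lrrw_sum_Icc_succ (fun k => X k ω) (m + 1)
      have hDval : x m = (X (m + 2) ω - w - α / ((m:ℝ) + 1) * S (m + 1) ω) / A (m + 2) := by
        simp only [hxdef, hDdef]
        push_cast
        ring_nf
      have hA2 := hAsucc m
      have hfac := lrrw_factor_pos hα1 hα2 m
      have hA1pos := hApos (m + 1)
      have hm1 : ((m:ℝ) + 1) ≠ 0 := by positivity
      have hne1 : A (m + 1) ≠ 0 := hA1pos.ne'
      have hne2 : (1 + α / ((m:ℝ) + 1)) ≠ 0 := hfac.ne'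
      have hne3 : ((m:ℝ) + 1) + α ≠ 0 := by
        have := hkα (m + 1) (by omega); push_cast at this; intro hcon; linarith
      have hne4 : (m:ℝ) * A (m+1) + A (m+1) + A (m+1) * α ≠ 0 := by
        intro hcon
        apply hne3
        have : A (m+1) * (((m:ℝ) + 1) + α) = 0 := by linarith [hcon]
        rcases mul_eq_zero.1 this with h | h
        · exact absurd h hne1
        · exact h
      show (S (m + 2) ω - L * (((m:ℕ) + 2 : ℕ) - A (m + 2))) / A (m + 2)
          = (S (m + 1) ω - L * (((m:ℕ) + 1 : ℕ) - A (m + 1))) / A (m + 1) + x m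
      rw [hDval, hSrec, hA2, ← hLw]
      push_cast
      field_simp
      ring
  -- assemble the limit
  have hgoalL : (p - q) * (1 - θ) / (1 - α) = L := by
    rw [hLdef, hwdef]; ring
  rw [hgoalL]
  have hX1 : Tendsto (fun n => X 1 ω / lrrwU α n) atTop (𝓝 0) :=
    Tendsto.div_atTop tendsto_const_nhds (lrrwU_tendsto hα1 hα2)
  have hshift : Tendsto (fun n => (∑ j ∈ Finset.range (n - 1), x j) / lrrwU α n) atTop (𝓝 0) := by
    refine (hkron.comp (tendsto_sub_atTop_nat 1)).congr' ?_
    filter_upwards [eventually_ge_atTop 1] with n hn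
    show (∑ j ∈ Finset.range (n - 1), x j) / b (n - 1) = _
    rw [hbdef]
    show (∑ j ∈ Finset.range (n - 1), x j) / lrrwU α (n - 1 + 1) = _
    rw [Nat.sub_add_cancel hn]
  have hAdiv : Tendsto (fun n : ℕ => A n / (n:ℝ)) atTop (𝓝 0) := by
    have h1 : Tendsto (fun n => (lrrwU α n)⁻¹) atTop (𝓝 0) :=
      (lrrwU_tendsto hα1 hα2).inv_tendsto_atTop
    refine h1.congr' ?_
    filter_upwards [eventually_ge_atTop 1] with n hn
    rw [hAdef]
    show ((n:ℝ) / lrrwP α (n - 1))⁻¹ = _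
    rw [inv_div]
  have h2 : Tendsto (fun n => (X 1 ω + ∑ j ∈ Finset.range (n - 1), x j) / lrrwU α n)
      atTop (𝓝 0) := by
    have h3 := hX1.add hshift
    rw [add_zero] at h3
    exact h3.congr fun n => (add_div _ _ _).symm
  have h4 := h2.add ((tendsto_const_nhds (x := L)).sub (hAdiv.const_mul L))
  have h5 : (0:ℝ) + (L - L * 0) = L := by ring
  rw [h5] at h4
  refine h4.congr' ?_
  filter_upwards [eventually_ge_atTop 1] with n hn
  have hT' := hT n hn
  have hnR : (0:ℝ) < n := by exact_mod_cast hn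
  have hu : lrrwU α n = (n:ℝ) / A n := by rw [hAdef]; rfl
  rw [← hT', hu]
  have hAn := hApos n
  field_simp
  ring
end

section
/- For the LRRW with α > 1/2, the martingale M_n = a_n S_n − ω A_n is bounded in L², with sup_n E[M_n²] ≤ (γ+τ) · Σ_{k=0}^∞ (Γ(α+1)Γ(k+1)/Γ(k+α+1))², and hence converges almost surely and in L² to a random variable M. -/
set_option maxHeartbeats 1000000

lemma lrrw_aux_gamma_sq_le {α : ℝ} (h0 : 0 < α) (h1 : α ≤ 1) (k : ℕ) :
    (Real.Gamma (α+1) * Real.Gamma ((k:ℝ)+1) / Real.Gamma ((k:ℝ)+α+1))^2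
      ≤ ((k:ℝ)+1) ^ (-(2*α)) := by
  induction k with
  | zero =>
    simp only [Nat.cast_zero, zero_add, Real.Gamma_one]
    rw [Real.one_rpow]
    have h : Real.Gamma (α+1) ≠ 0 := (Real.Gamma_pos_of_pos (by linarith)).ne'
    rw [mul_one, div_self h, one_pow]
  | succ k ih =>
    have hu : (0:ℝ) < (k:ℝ)+1 := by positivity
    have hv : (0:ℝ) < (k:ℝ)+2 := by positivity
    have hw : (0:ℝ) < (k:ℝ)+α+1 := by linarith
    have hΓ2 : Real.Gamma ((k:ℝ)+1+1) = ((k:ℝ)+1) * Real.Gamma ((k:ℝ)+1) :=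
      Real.Gamma_add_one hu.ne'
    have hΓ3 : Real.Gamma ((k:ℝ)+1+α+1) = ((k:ℝ)+α+1) * Real.Gamma ((k:ℝ)+α+1) := by
      rw [show ((k:ℝ)+1+α+1) = ((k:ℝ)+α+1)+1 by ring, Real.Gamma_add_one hw.ne']
    have hΓpos : 0 < Real.Gamma ((k:ℝ)+α+1) := Real.Gamma_pos_of_pos hw
    have hΓpos2 : 0 < Real.Gamma ((k:ℝ)+1) := Real.Gamma_pos_of_pos hu
    have hΓa : 0 < Real.Gamma (α+1) := Real.Gamma_pos_of_pos (by linarith)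
    have hrw : Real.Gamma (α+1) * Real.Gamma ((k:ℝ)+1+1) / Real.Gamma ((k:ℝ)+1+α+1)
        = (Real.Gamma (α+1) * Real.Gamma ((k:ℝ)+1) / Real.Gamma ((k:ℝ)+α+1))
          * (((k:ℝ)+1)/((k:ℝ)+α+1)) := by
      rw [hΓ2, hΓ3]; field_simp
    -- Bernoulli
    have hB : (((k:ℝ)+2)/((k:ℝ)+1)) ^ α ≤ ((k:ℝ)+α+1)/((k:ℝ)+1) := by
      have := rpow_one_add_le_one_add_mul_self (s := 1/((k:ℝ)+1)) (le_trans (by norm_num : (-1:ℝ) ≤ 0) (by positivity)) h0.le h1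
      calc (((k:ℝ)+2)/((k:ℝ)+1)) ^ α = (1 + 1/((k:ℝ)+1)) ^ α := by
            congr 1; field_simp; ring
        _ ≤ 1 + α * (1/((k:ℝ)+1)) := this
        _ = ((k:ℝ)+α+1)/((k:ℝ)+1) := by field_simp; ring
    have hdiv : ((k:ℝ)+2)^(2*α) / ((k:ℝ)+1)^(2*α) ≤ ((k:ℝ)+α+1)^2 / ((k:ℝ)+1)^2 := by
      have hsq : ((((k:ℝ)+2)/((k:ℝ)+1)) ^ α)^2 ≤ (((k:ℝ)+α+1)/((k:ℝ)+1))^2 := by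
        have h1' : (0:ℝ) ≤ (((k:ℝ)+2)/((k:ℝ)+1)) ^ α := by positivity
        exact pow_le_pow_left₀ h1' hB 2
      calc ((k:ℝ)+2)^(2*α) / ((k:ℝ)+1)^(2*α)
          = ((((k:ℝ)+2)/((k:ℝ)+1)) ^ α)^2 := by
            rw [← Real.rpow_natCast ((((k:ℝ)+2)/((k:ℝ)+1)) ^ α) 2, ← Real.rpow_mul (by positivity),
              Real.div_rpow hv.le hu.le]
            norm_num [mul_comm]
        _ ≤ (((k:ℝ)+α+1)/((k:ℝ)+1))^2 := hsq
        _ = ((k:ℝ)+α+1)^2 / ((k:ℝ)+1)^2 := div_pow _ _ _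
    have h2 : ((k:ℝ)+2)^(2*α) * ((k:ℝ)+1)^2 ≤ ((k:ℝ)+α+1)^2 * ((k:ℝ)+1)^(2*α) :=
      (div_le_div_iff₀ (by positivity) (by positivity)).1 hdiv
    have key : ((k:ℝ)+1)^(-(2*α)) * (((k:ℝ)+1)/((k:ℝ)+α+1))^2 ≤ ((k:ℝ)+2)^(-(2*α)) := by
      rw [Real.rpow_neg hu.le, Real.rpow_neg hv.le,
        show (((k:ℝ)+1)^(2*α))⁻¹ * (((k:ℝ)+1)/((k:ℝ)+α+1))^2
          = ((k:ℝ)+1)^2 / (((k:ℝ)+1)^(2*α) * ((k:ℝ)+α+1)^2) by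
            rw [div_pow]; field_simp,
        inv_eq_one_div, div_le_div_iff₀ (by positivity) (by positivity)]
      nlinarith [h2]
    push_cast
    calc (Real.Gamma (α+1) * Real.Gamma ((k:ℝ)+1+1) / Real.Gamma ((k:ℝ)+1+α+1))^2
        = (Real.Gamma (α+1) * Real.Gamma ((k:ℝ)+1) / Real.Gamma ((k:ℝ)+α+1))^2
          * (((k:ℝ)+1)/((k:ℝ)+α+1))^2 := by rw [hrw, mul_pow]
      _ ≤ ((k:ℝ)+1)^(-(2*α)) * (((k:ℝ)+1)/((k:ℝ)+α+1))^2 :=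
          mul_le_mul_of_nonneg_right ih (by positivity)
      _ ≤ ((k:ℝ)+2)^(-(2*α)) := key
      _ = ((k:ℝ)+1+1)^(-(2*α)) := by ring_nf

lemma lrrw_aux_summable {α : ℝ} (h0 : 1/2 < α) (h1 : α ≤ 1) :
    Summable (fun k : ℕ =>
      (Real.Gamma (α+1) * Real.Gamma ((k:ℝ)+1) / Real.Gamma ((k:ℝ)+α+1))^2) := by
  have hsum : Summable (fun n : ℕ => ((n:ℝ))^(-(2*α))) :=
    Real.summable_nat_rpow.2 (by linarith)
  have hsum1 : Summable (fun n : ℕ => ((n:ℝ)+1)^(-(2*α))) := by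
    have := (summable_nat_add_iff (f := fun n : ℕ => ((n:ℝ))^(-(2*α))) 1).2 hsum
    exact this.congr fun n => by push_cast; ring_nf
  refine hsum1.of_nonneg_of_le (fun k => sq_nonneg _) (fun k => ?_)
  exact lrrw_aux_gamma_sq_le (by linarith) h1 k

open MeasureTheory ProbabilityTheory Filter Real Finset

theorem lrrw_martingale_L2_bounded_superdiffusive
    {Ω : Type*} [MeasurableSpace Ω] (μ : Measure Ω) [IsProbabilityMeasure μ]
    (p q r θ : ℝ) (hp : 0 ≤ p) (hq : 0 ≤ q) (hr : 0 ≤ r) (hpqr : p + q + r = 1)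
    (hθ0 : 0 ≤ θ) (hθ1 : θ < 1)
    (X : ℕ → Ω → ℝ) (hXmeas : ∀ n, StronglyMeasurable (X n))
    (hXval : ∀ n ω, X n ω = 1 ∨ X n ω = -1 ∨ X n ω = 0)
    (hX0 : ∀ ω, X 0 ω = 0)
    (S : ℕ → Ω → ℝ) (hS : ∀ n ω, S n ω = ∑ k ∈ Finset.Icc 1 n, X k ω)
    (Np Nm : ℕ → Ω → ℝ)
    (hNp : ∀ n ω, Np n ω = ∑ k ∈ Finset.Icc 1 n, if X k ω = 1 then (1 : ℝ) else 0)
    (hNm : ∀ n ω, Nm n ω = ∑ k ∈ Finset.Icc 1 n, if X k ω = -1 then (1 : ℝ) else 0)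
    (hinit1 : μ {ω | X 1 ω = 1} = ENNReal.ofReal p)
    (hinit2 : μ {ω | X 1 ω = -1} = ENNReal.ofReal q)
    (hcond1 : ∀ n : ℕ, 1 ≤ n →
      μ[Set.indicator {ω | X (n + 1) ω = 1} (fun _ => (1 : ℝ)) |
          (MeasureTheory.Filtration.natural X hXmeas) n]
        =ᵐ[μ] fun ω => (1 - θ) * p + θ * (p * Np n ω + q * Nm n ω) / n)
    (hcond2 : ∀ n : ℕ, 1 ≤ n →
      μ[Set.indicator {ω | X (n + 1) ω = -1} (fun _ => (1 : ℝ)) |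
          (MeasureTheory.Filtration.natural X hXmeas) n]
        =ᵐ[μ] fun ω => (1 - θ) * q + θ * (q * Np n ω + p * Nm n ω) / n)
    (hα : 1 / 2 < θ * (p - q))
    (a : ℕ → ℝ)
    (ha : ∀ n : ℕ, a n = Real.Gamma n * Real.Gamma (θ * (p - q) + 1) /
      Real.Gamma ((n : ℝ) + θ * (p - q)))
    (A : ℕ → ℝ) (hA : ∀ n : ℕ, A n = ∑ k ∈ Finset.Icc 1 n, a k)
    (M : ℕ → Ω → ℝ)
    (hM : ∀ n ω, M n ω = a n * S n ω - (p - q) * (1 - θ) * A n) :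
    (∀ n : ℕ, ∫ ω, (M n ω) ^ 2 ∂μ ≤
      (θ * (p + q) + (1 - θ) * (p + q)) *
        ∑' k : ℕ, (Real.Gamma (θ * (p - q) + 1) * Real.Gamma ((k : ℝ) + 1) /
          Real.Gamma ((k : ℝ) + θ * (p - q) + 1)) ^ 2) ∧
    ∃ Mlim : Ω → ℝ,
      (∀ᵐ ω ∂μ, Tendsto (fun n : ℕ => M n ω) atTop (nhds (Mlim ω))) ∧
      Tendsto (fun n : ℕ => ∫ ω, (M n ω - Mlim ω) ^ 2 ∂μ) atTop (nhds 0) := by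
  classical
  set α := θ * (p - q) with hαdef
  have hα0 : 0 < α := lt_trans (by norm_num) hα
  have hp1 : p ≤ 1 := by linarith
  have hpq0 : 0 < p - q := by
    by_contra h
    push_neg at h
    nlinarith [mul_nonpos_of_nonneg_of_nonpos hθ0 h]
  have hpq1 : p - q ≤ 1 := by linarith
  have hα1 : α < 1 := by nlinarith
  set F := MeasureTheory.Filtration.natural X hXmeas with hF
  have hXF : ∀ {k n : ℕ}, k ≤ n → StronglyMeasurable[F n] (X k) :=
    fun {k n} h => ((Filtration.stronglyAdapted_natural hXmeas) k).mono (F.mono h)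
  -- indicator rewriting
  have hIp : ∀ n : ℕ, Set.indicator {ω | X n ω = 1} (fun _ => (1:ℝ))
      = fun ω => if X n ω = 1 then (1:ℝ) else 0 := by
    intro n; funext ω; simp [Set.indicator_apply]
  have hIm : ∀ n : ℕ, Set.indicator {ω | X n ω = -1} (fun _ => (1:ℝ))
      = fun ω => if X n ω = -1 then (1:ℝ) else 0 := by
    intro n; funext ω; simp [Set.indicator_apply]
  have hifmeas : ∀ (v : ℝ) {k n : ℕ}, k ≤ n →
      StronglyMeasurable[F n] (fun ω => if X k ω = v then (1:ℝ) else 0) := by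
    intro v k n hkn
    have : (fun ω => if X k ω = v then (1:ℝ) else 0)
        = Set.indicator ((X k) ⁻¹' {v}) (fun _ => (1:ℝ)) := by
      funext ω; simp [Set.indicator_apply]
    rw [this]
    exact stronglyMeasurable_const.indicator ((hXF hkn).measurable (measurableSet_singleton v))
  have hSmeas : ∀ n, StronglyMeasurable[F n] (S n) := by
    intro n
    have : S n = fun ω => ∑ k ∈ Finset.Icc 1 n, X k ω := funext (hS n)
    rw [this]
    exact Finset.stronglyMeasurable_fun_sum _ fun k hk => hXF (Finset.mem_Icc.1 hk).2
  have hNpmeas : ∀ n, StronglyMeasurable[F n] (Np n) := by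
    intro n
    have : Np n = fun ω => ∑ k ∈ Finset.Icc 1 n, if X k ω = 1 then (1:ℝ) else 0 :=
      funext (hNp n)
    rw [this]
    exact Finset.stronglyMeasurable_fun_sum _ fun k hk => hifmeas 1 (Finset.mem_Icc.1 hk).2
  have hNmmeas : ∀ n, StronglyMeasurable[F n] (Nm n) := by
    intro n
    have : Nm n = fun ω => ∑ k ∈ Finset.Icc 1 n, if X k ω = -1 then (1:ℝ) else 0 :=
      funext (hNm n)
    rw [this]
    exact Finset.stronglyMeasurable_fun_sum _ fun k hk => hifmeas (-1) (Finset.mem_Icc.1 hk).2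
  -- bounds
  have hXb : ∀ n ω, |X n ω| ≤ 1 := by
    intro n ω; rcases hXval n ω with h | h | h <;> rw [h] <;> norm_num
  have hSb : ∀ n ω, |S n ω| ≤ n := by
    intro n ω
    rw [hS]
    calc |∑ k ∈ Finset.Icc 1 n, X k ω| ≤ ∑ k ∈ Finset.Icc 1 n, |X k ω| :=
          Finset.abs_sum_le_sum_abs _ _
      _ ≤ ∑ k ∈ Finset.Icc 1 n, (1:ℝ) := Finset.sum_le_sum fun k _ => hXb k ω
      _ = n := by simp
  have hNpNm_sub : ∀ n ω, Np n ω - Nm n ω = S n ω := by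
    intro n ω
    rw [hNp, hNm, hS, ← Finset.sum_sub_distrib]
    refine Finset.sum_congr rfl fun k _ => ?_
    rcases hXval k ω with h | h | h <;> rw [h] <;> norm_num
  have hNpNm_le : ∀ n ω, Np n ω + Nm n ω ≤ n := by
    intro n ω
    rw [hNp, hNm, ← Finset.sum_add_distrib]
    calc (∑ k ∈ Finset.Icc 1 n, ((if X k ω = 1 then (1:ℝ) else 0)
          + if X k ω = -1 then (1:ℝ) else 0))
        ≤ ∑ k ∈ Finset.Icc 1 n, (1:ℝ) := by
          refine Finset.sum_le_sum fun k _ => ?_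
          rcases hXval k ω with h | h | h <;> rw [h] <;> norm_num
      _ = n := by simp
  have hNp0 : ∀ n ω, 0 ≤ Np n ω := by
    intro n ω; rw [hNp]; exact Finset.sum_nonneg fun k _ => by positivity
  have hNm0 : ∀ n ω, 0 ≤ Nm n ω := by
    intro n ω; rw [hNm]; exact Finset.sum_nonneg fun k _ => by positivity
  -- integrability helper
  have hint : ∀ (f : Ω → ℝ) (C : ℝ), AEStronglyMeasurable f μ → (∀ ω, |f ω| ≤ C) →
      Integrable f μ := by
    intro f C hf hC
    exact (integrable_const C).mono' hf (Eventually.of_forall (by simpa using hC))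
  set c : ℕ → Ω → ℝ := fun n ω => (1-θ)*(p-q) + θ*(p-q)*S n ω/n with hcdef
  have hcmeas : ∀ n, StronglyMeasurable[F n] (c n) := by
    intro n
    have e : c n = fun ω => (1-θ)*(p-q) + (θ*(p-q)/n) * S n ω := by
      funext ω; rw [hcdef]; ring
    rw [e]
    exact stronglyMeasurable_const.add ((hSmeas n).const_mul _)
  have hcb : ∀ n ω, 1 ≤ n → |c n ω| ≤ 1 := by
    intro n ω hn
    have hn1 : (1:ℝ) ≤ n := by exact_mod_cast hn
    have hnpos : (0:ℝ) < n := by linarith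
    have hs1 : S n ω / n ≤ 1 := by
      rw [div_le_one hnpos]; exact (abs_le.1 (hSb n ω)).2
    have hs2 : (-1:ℝ) ≤ S n ω / n := by
      rw [le_div_iff₀ hnpos]; have := (abs_le.1 (hSb n ω)).1; linarith
    have e1 : θ*(p-q)*S n ω/n = (θ*(p-q)) * (S n ω / n) := by ring
    rw [abs_le]
    constructor
    · have := mul_le_mul_of_nonneg_left hs2 (mul_nonneg hθ0 hpq0.le)
      rw [hcdef]; simp only []
      rw [e1]
      nlinarith
    · have := mul_le_mul_of_nonneg_left hs1 (mul_nonneg hθ0 hpq0.le)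
      rw [hcdef]; simp only []
      rw [e1]
      nlinarith
  have hcint : ∀ n, Integrable (c n) μ := by
    intro n
    rcases Nat.eq_zero_or_pos n with rfl | hn
    · refine hint _ (|(1-θ)*(p-q)|) (((hcmeas 0).mono (F.le 0)).aestronglyMeasurable) ?_
      intro ω
      simp only [hcdef, Nat.cast_zero, div_zero]
      simp
    · exact hint _ 1 (((hcmeas n).mono (F.le n)).aestronglyMeasurable) fun ω => hcb n ω hn
  have hXint : ∀ n, Integrable (X n) μ :=
    fun n => hint _ 1 (hXmeas n).aestronglyMeasurable (hXb n)
  -- condexp of X (n+1)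
  have hXsplit : ∀ n : ℕ, X n = (fun ω => if X n ω = 1 then (1:ℝ) else 0)
      - (fun ω => if X n ω = -1 then (1:ℝ) else 0) := by
    intro n; funext ω
    rcases hXval n ω with h | h | h <;> rw [Pi.sub_apply, h] <;> norm_num
  have hX2split : ∀ n : ℕ, (fun ω => (X n ω)^2) = (fun ω => if X n ω = 1 then (1:ℝ) else 0)
      + (fun ω => if X n ω = -1 then (1:ℝ) else 0) := by
    intro n; funext ω
    rcases hXval n ω with h | h | h <;> rw [Pi.add_apply, h] <;> norm_num
  have hifint : ∀ (v : ℝ) (n : ℕ), Integrable (fun ω => if X n ω = v then (1:ℝ) else 0) μ := by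
    intro v n
    refine hint _ 1 (((hifmeas v (le_refl n)).mono (F.le n)).aestronglyMeasurable) ?_
    intro ω; split <;> norm_num
  have hc : ∀ n : ℕ, 1 ≤ n → μ[X (n+1) | F n] =ᵐ[μ] c n := by
    intro n hn
    have hn0 : (n:ℝ) ≠ 0 := by exact Nat.cast_ne_zero.2 (by omega)
    have h1 := hcond1 n hn
    have h2 := hcond2 n hn
    rw [hIp (n+1)] at h1
    rw [hIm (n+1)] at h2
    calc μ[X (n+1)|F n]
        = μ[(fun ω => if X (n+1) ω = 1 then (1:ℝ) else 0)
            - (fun ω => if X (n+1) ω = -1 then (1:ℝ) else 0)|F n] := by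
          rw [← hXsplit (n+1)]
      _ =ᵐ[μ] μ[(fun ω => if X (n+1) ω = 1 then (1:ℝ) else 0)|F n]
            - μ[(fun ω => if X (n+1) ω = -1 then (1:ℝ) else 0)|F n] :=
          condExp_sub (hifint 1 (n+1)) (hifint (-1) (n+1)) _
      _ =ᵐ[μ] (fun ω => (1 - θ) * p + θ * (p * Np n ω + q * Nm n ω) / n)
            - (fun ω => (1 - θ) * q + θ * (q * Np n ω + p * Nm n ω) / n) := h1.sub h2
      _ = c n := by
          funext ω
          rw [Pi.sub_apply, hcdef]
          simp only []
          rw [← hNpNm_sub n ω]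
          field_simp
          ring
  have hc2 : ∀ n : ℕ, 1 ≤ n → μ[fun ω => (X (n+1) ω)^2 | F n]
      =ᵐ[μ] fun ω => (1-θ)*(p+q) + θ*(p+q)*(Np n ω + Nm n ω)/n := by
    intro n hn
    have hn0 : (n:ℝ) ≠ 0 := by exact Nat.cast_ne_zero.2 (by omega)
    have h1 := hcond1 n hn
    have h2 := hcond2 n hn
    rw [hIp (n+1)] at h1
    rw [hIm (n+1)] at h2
    calc μ[fun ω => (X (n+1) ω)^2|F n]
        = μ[(fun ω => if X (n+1) ω = 1 then (1:ℝ) else 0)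
            + (fun ω => if X (n+1) ω = -1 then (1:ℝ) else 0)|F n] := by
          rw [← hX2split (n+1)]
      _ =ᵐ[μ] μ[(fun ω => if X (n+1) ω = 1 then (1:ℝ) else 0)|F n]
            + μ[(fun ω => if X (n+1) ω = -1 then (1:ℝ) else 0)|F n] :=
          condExp_add (hifint 1 (n+1)) (hifint (-1) (n+1)) _
      _ =ᵐ[μ] (fun ω => (1 - θ) * p + θ * (p * Np n ω + q * Nm n ω) / n)
            + (fun ω => (1 - θ) * q + θ * (q * Np n ω + p * Nm n ω) / n) := h1.add h2
      _ = fun ω => (1-θ)*(p+q) + θ*(p+q)*(Np n ω + Nm n ω)/n := by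
          funext ω
          rw [Pi.add_apply]
          field_simp
          ring
  have hξb : ∀ n ω, |X (n+1) ω - c n ω| ≤ 2 := by
    intro n ω
    rcases Nat.eq_zero_or_pos n with rfl | hn
    · have : c 0 ω = (1-θ)*(p-q) := by rw [hcdef]; simp
      rw [this]
      have h2 : |(1-θ)*(p-q)| ≤ 1 := by
        rw [abs_of_nonneg (by nlinarith)]; nlinarith
      calc |X 1 ω - (1-θ)*(p-q)| ≤ |X 1 ω| + |(1-θ)*(p-q)| := abs_sub _ _
        _ ≤ 2 := by have := hXb 1 ω; linarith
    · calc |X (n+1) ω - c n ω| ≤ |X (n+1) ω| + |c n ω| := abs_sub _ _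
        _ ≤ 2 := by have := hXb (n+1) ω; have := hcb n ω hn; linarith
  have hξmeas : ∀ n : ℕ, StronglyMeasurable (fun ω => X (n+1) ω - c n ω) :=
    fun n => (hXmeas (n+1)).sub ((hcmeas n).mono (F.le n))
  have hξint : ∀ n : ℕ, Integrable (fun ω => X (n+1) ω - c n ω) μ :=
    fun n => hint _ 2 (hξmeas n).aestronglyMeasurable (hξb n)
  have hξzero : ∀ n : ℕ, 1 ≤ n →
      μ[fun ω => X (n+1) ω - c n ω|F n] =ᵐ[μ] fun _ => (0:ℝ) := by
    intro n hn
    have h1 : (fun ω => X (n+1) ω - c n ω) = X (n+1) - c n := rfl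
    rw [h1]
    calc μ[X (n+1) - c n|F n] =ᵐ[μ] μ[X (n+1)|F n] - μ[c n|F n] :=
          condExp_sub (hXint (n+1)) (hcint n) _
      _ =ᵐ[μ] c n - c n := by
          rw [condExp_of_stronglyMeasurable (F.le n) (hcmeas n) (hcint n)]
          exact (hc n hn).sub (EventuallyEq.refl _ _)
      _ = fun _ => (0:ℝ) := by funext ω; simp
  have h0A : ∀ n : ℕ, 1 ≤ n → ∀ (Z : Ω → ℝ) (C : ℝ), StronglyMeasurable[F n] Z →
      (∀ ω, |Z ω| ≤ C) → ∫ ω, Z ω * (X (n+1) ω - c n ω) ∂μ = 0 := by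
    intro n hn Z C hZ hZb
    have hZξi : Integrable (Z * fun ω => X (n+1) ω - c n ω) μ := by
      refine hint _ (C*2) (((hZ.mono (F.le n)).mul (hξmeas n)).aestronglyMeasurable) ?_
      intro ω
      rw [Pi.mul_apply, abs_mul]
      exact mul_le_mul (hZb ω) (hξb n ω) (abs_nonneg _) (le_trans (abs_nonneg _) (hZb ω))
    have hpull := condExp_mul_of_stronglyMeasurable_left hZ hZξi (hξint n)
    have hzero : μ[Z * fun ω => X (n+1) ω - c n ω|F n] =ᵐ[μ] fun _ => (0:ℝ) := by
      refine hpull.trans ?_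
      calc Z * μ[fun ω => X (n+1) ω - c n ω|F n] =ᵐ[μ] Z * fun _ => (0:ℝ) :=
            EventuallyEq.mul (EventuallyEq.refl _ _) (hξzero n hn)
        _ = fun _ => (0:ℝ) := by funext ω; simp
    calc ∫ ω, Z ω * (X (n+1) ω - c n ω) ∂μ
        = ∫ ω, (Z * fun ω => X (n+1) ω - c n ω) ω ∂μ := rfl
      _ = ∫ ω, (μ[Z * fun ω => X (n+1) ω - c n ω|F n]) ω ∂μ :=
          (integral_condExp (F.le n)).symm
      _ = ∫ ω, (fun _ => (0:ℝ)) ω ∂μ := integral_congr_ae hzero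
      _ = 0 := by simp
  have hX2int : ∀ n : ℕ, Integrable (fun ω => (X n ω)^2) μ := by
    intro n
    refine hint _ 1 ((hXmeas n).pow 2).aestronglyMeasurable fun ω => ?_
    rw [abs_pow]
    calc |X n ω|^2 ≤ 1^2 := pow_le_pow_left₀ (abs_nonneg _) (hXb n ω) 2
      _ = 1 := one_pow 2
  have hX2bd : ∀ n : ℕ, 1 ≤ n → ∫ ω, (X (n+1) ω)^2 ∂μ ≤ p + q := by
    intro n hn
    have hn0 : (0:ℝ) < n := by exact_mod_cast Nat.pos_of_ne_zero (by omega)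
    have hbdd : ∀ ω, (1-θ)*(p+q) + θ*(p+q)*(Np n ω + Nm n ω)/n ≤ p + q := by
      intro ω
      have hdiv : (Np n ω + Nm n ω)/n ≤ 1 :=
        div_le_one_of_le₀ (hNpNm_le n ω) hn0.le
      have hdiv0 : 0 ≤ (Np n ω + Nm n ω)/n :=
        div_nonneg (add_nonneg (hNp0 n ω) (hNm0 n ω)) hn0.le
      have e : θ*(p+q)*(Np n ω + Nm n ω)/n = (θ*(p+q)) * ((Np n ω + Nm n ω)/n) := by
        ring
      rw [e]
      nlinarith [mul_nonneg (mul_nonneg hθ0 (add_nonneg hp hq)) (sub_nonneg.2 hdiv)]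
    have hgint : Integrable (fun ω => (1-θ)*(p+q) + θ*(p+q)*(Np n ω + Nm n ω)/n) μ := by
      refine hint _ (|(1-θ)*(p+q)| + |θ*(p+q)|) ?_ ?_
      · have : StronglyMeasurable (fun ω => (1-θ)*(p+q) + θ*(p+q)*(Np n ω + Nm n ω)/n) := by
          apply StronglyMeasurable.add stronglyMeasurable_const
          have : (fun ω => θ*(p+q)*(Np n ω + Nm n ω)/n)
              = fun ω => (θ*(p+q)/n) * (Np n ω + Nm n ω) := by funext ω; ring
          rw [this]
          exact (((hNpmeas n).add (hNmmeas n)).const_mul _).mono (F.le n)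
        exact this.aestronglyMeasurable
      · intro ω
        have hdiv : (Np n ω + Nm n ω)/n ≤ 1 := div_le_one_of_le₀ (hNpNm_le n ω) hn0.le
        have hdiv0 : 0 ≤ (Np n ω + Nm n ω)/n :=
          div_nonneg (add_nonneg (hNp0 n ω) (hNm0 n ω)) hn0.le
        have e : θ*(p+q)*(Np n ω + Nm n ω)/n = (θ*(p+q)) * ((Np n ω + Nm n ω)/n) := by ring
        calc |(1-θ)*(p+q) + θ*(p+q)*(Np n ω + Nm n ω)/n|
            ≤ |(1-θ)*(p+q)| + |θ*(p+q)*(Np n ω + Nm n ω)/n| := abs_add_le _ _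
          _ ≤ |(1-θ)*(p+q)| + |θ*(p+q)| := by
              refine add_le_add (le_refl _) ?_
              rw [e, abs_mul]
              refine mul_le_of_le_one_right (abs_nonneg _) ?_
              rw [abs_of_nonneg hdiv0]; exact hdiv
    calc ∫ ω, (X (n+1) ω)^2 ∂μ
        = ∫ ω, (μ[fun ω => (X (n+1) ω)^2|F n]) ω ∂μ := (integral_condExp (F.le n)).symm
      _ = ∫ ω, ((1-θ)*(p+q) + θ*(p+q)*(Np n ω + Nm n ω)/n) ∂μ := integral_congr_ae (hc2 n hn)
      _ ≤ ∫ _, (p+q) ∂μ := integral_mono hgint (integrable_const _) hbdd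
      _ = p + q := by simp
  have h0B : ∀ n : ℕ, 1 ≤ n → ∫ ω, (X (n+1) ω - c n ω)^2 ∂μ ≤ p + q := by
    intro n hn
    have hcc : ∫ ω, c n ω * (X (n+1) ω - c n ω) ∂μ = 0 :=
      h0A n hn (c n) 1 (hcmeas n) (fun ω => hcb n ω hn)
    have hcXint : Integrable (fun ω => c n ω * X (n+1) ω) μ := by
      refine hint _ 1 (((hcmeas n).mono (F.le n)).mul (hXmeas (n+1))).aestronglyMeasurable ?_
      intro ω
      rw [abs_mul]
      exact mul_le_one₀ (hcb n ω hn) (abs_nonneg _) (hXb (n+1) ω)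
    have hc2int : Integrable (fun ω => (c n ω)^2) μ := by
      refine hint _ 1 (((hcmeas n).mono (F.le n)).pow 2).aestronglyMeasurable ?_
      intro ω
      rw [abs_pow]
      calc |c n ω|^2 ≤ 1^2 := pow_le_pow_left₀ (abs_nonneg _) (hcb n ω hn) 2
        _ = 1 := one_pow 2
    have hexp : ∫ ω, (X (n+1) ω - c n ω)^2 ∂μ
        = ∫ ω, (X (n+1) ω)^2 ∂μ - ∫ ω, (c n ω)^2 ∂μ := by
      have e : ∀ ω, (X (n+1) ω - c n ω)^2
          = (X (n+1) ω)^2 - (c n ω)^2 - 2 * (c n ω * (X (n+1) ω - c n ω)) := by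
        intro ω; ring
      calc ∫ ω, (X (n+1) ω - c n ω)^2 ∂μ
          = ∫ ω, ((X (n+1) ω)^2 - (c n ω)^2 - 2 * (c n ω * (X (n+1) ω - c n ω))) ∂μ := by
            exact integral_congr_ae (Eventually.of_forall e)
        _ = ∫ ω, ((X (n+1) ω)^2 - (c n ω)^2) ∂μ
            - ∫ ω, 2 * (c n ω * (X (n+1) ω - c n ω)) ∂μ := by
            apply integral_sub ((hX2int (n+1)).sub hc2int)
            exact Integrable.const_mul (by
              have e2 : (fun ω => c n ω * (X (n+1) ω - c n ω))
                  = (fun ω => c n ω * X (n+1) ω) - fun ω => (c n ω)^2 := by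
                funext ω; simp [sq]; ring
              rw [e2]; exact hcXint.sub hc2int) 2
        _ = ∫ ω, (X (n+1) ω)^2 ∂μ - ∫ ω, (c n ω)^2 ∂μ := by
            rw [integral_sub (hX2int (n+1)) hc2int, integral_const_mul, hcc, mul_zero, sub_zero]
    rw [hexp]
    have h1 := hX2bd n hn
    have h2 : 0 ≤ ∫ ω, (c n ω)^2 ∂μ := integral_nonneg fun ω => sq_nonneg _
    linarith
  have KEY : ∀ n : ℕ, 1 ≤ n → ∀ (Z : Ω → ℝ) (C : ℝ), StronglyMeasurable[F n] Z →
      (∀ ω, |Z ω| ≤ C) →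
      ∫ ω, (Z ω + a (n+1) * (X (n+1) ω - c n ω))^2 ∂μ
        ≤ ∫ ω, (Z ω)^2 ∂μ + (a (n+1))^2 * (p+q) := by
    intro n hn Z C hZ hZb
    have hZm : StronglyMeasurable Z := hZ.mono (F.le n)
    have hZ2int : Integrable (fun ω => (Z ω)^2) μ := by
      refine hint _ (C^2) (hZm.pow 2).aestronglyMeasurable fun ω => ?_
      rw [abs_pow]
      exact pow_le_pow_left₀ (abs_nonneg _) (hZb ω) 2
    have hZξint : Integrable (fun ω => Z ω * (X (n+1) ω - c n ω)) μ := by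
      refine hint _ (C*2) (hZm.mul (hξmeas n)).aestronglyMeasurable fun ω => ?_
      rw [abs_mul]
      exact mul_le_mul (hZb ω) (hξb n ω) (abs_nonneg _) (le_trans (abs_nonneg _) (hZb ω))
    have hξ2int : Integrable (fun ω => (X (n+1) ω - c n ω)^2) μ := by
      refine hint _ 4 ((hξmeas n).pow 2).aestronglyMeasurable fun ω => ?_
      rw [abs_pow]
      calc |X (n+1) ω - c n ω|^2 ≤ 2^2 := pow_le_pow_left₀ (abs_nonneg _) (hξb n ω) 2
        _ = 4 := by norm_num
    have hexp : ∫ ω, (Z ω + a (n+1) * (X (n+1) ω - c n ω))^2 ∂μ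
        = ∫ ω, (Z ω)^2 ∂μ + (2 * a (n+1)) * ∫ ω, Z ω * (X (n+1) ω - c n ω) ∂μ
          + (a (n+1))^2 * ∫ ω, (X (n+1) ω - c n ω)^2 ∂μ := by
      have e : ∀ ω, (Z ω + a (n+1) * (X (n+1) ω - c n ω))^2
          = (Z ω)^2 + (2 * a (n+1)) * (Z ω * (X (n+1) ω - c n ω))
            + (a (n+1))^2 * (X (n+1) ω - c n ω)^2 := by intro ω; ring
      have i1 : Integrable (fun ω => (Z ω)^2
          + (2 * a (n+1)) * (Z ω * (X (n+1) ω - c n ω))) μ :=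
        hZ2int.add (hZξint.const_mul _)
      have i2 : Integrable (fun ω => (a (n+1))^2 * (X (n+1) ω - c n ω)^2) μ :=
        hξ2int.const_mul _
      have h12 := integral_add i1 i2
      have h3 := integral_add hZ2int (hZξint.const_mul (2 * a (n+1)))
      rw [integral_congr_ae (Eventually.of_forall e), h12, h3, integral_const_mul,
        integral_const_mul]
    rw [hexp, h0A n hn Z C hZ hZb, mul_zero, add_zero]
    have := h0B n hn
    nlinarith [sq_nonneg (a (n+1))]
  have hΓα : 0 < Real.Gamma (α+1) := Real.Gamma_pos_of_pos (by linarith)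
  have ha1 : a 1 = 1 := by
    rw [ha 1]
    rw [Nat.cast_one, Real.Gamma_one, one_mul, add_comm 1 α]
    exact div_self hΓα.ne'
  have hrec : ∀ n : ℕ, 1 ≤ n → a n * n = a (n+1) * ((n:ℝ) + α) := by
    intro n hn
    have hn0 : (0:ℝ) < n := by exact_mod_cast Nat.pos_of_ne_zero (by omega)
    have hnα : (0:ℝ) < (n:ℝ) + α := by linarith
    have hΓn : 0 < Real.Gamma (n:ℝ) := Real.Gamma_pos_of_pos hn0
    have hΓnα : 0 < Real.Gamma ((n:ℝ) + α) := Real.Gamma_pos_of_pos hnα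
    have e1 : Real.Gamma ((n:ℝ)+1) = n * Real.Gamma (n:ℝ) := Real.Gamma_add_one hn0.ne'
    have e2 : Real.Gamma ((n:ℝ)+1+α) = ((n:ℝ)+α) * Real.Gamma ((n:ℝ)+α) := by
      rw [show ((n:ℝ)+1+α) = ((n:ℝ)+α)+1 by ring, Real.Gamma_add_one hnα.ne']
    rw [ha n, ha (n+1)]
    push_cast
    rw [e1, e2]
    field_simp
  have hSsucc : ∀ (n : ℕ) ω, S (n+1) ω = S n ω + X (n+1) ω := by
    intro n ω
    rw [hS, hS, Finset.sum_Icc_succ_top (by omega)]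
  have hAsucc : ∀ n : ℕ, A (n+1) = A n + a (n+1) := by
    intro n
    rw [hA, hA, Finset.sum_Icc_succ_top (by omega)]
  have hMrec : ∀ n : ℕ, 1 ≤ n → ∀ ω,
      M (n+1) ω = M n ω + a (n+1) * (X (n+1) ω - c n ω) := by
    intro n hn ω
    have hn0 : (n:ℝ) ≠ 0 := Nat.cast_ne_zero.2 (by omega)
    have hrecn := hrec n hn
    rw [hαdef] at hrecn
    rw [hM, hM, hSsucc, hAsucc, hcdef]
    simp only []
    field_simp
    linear_combination (-(S n ω)) * hrecn
  have hMmeas : ∀ n, StronglyMeasurable[F n] (M n) := by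
    intro n
    have e : M n = fun ω => a n * S n ω - (p - q) * (1 - θ) * A n := by
      funext ω; exact hM n ω
    rw [e]
    exact ((hSmeas n).const_mul (a n)).sub stronglyMeasurable_const
  have hMbound : ∀ n ω, |M n ω| ≤ |a n| * n + |(p-q)*(1-θ)*A n| := by
    intro n ω
    rw [hM]
    calc |a n * S n ω - (p-q)*(1-θ)*A n| ≤ |a n * S n ω| + |(p-q)*(1-θ)*A n| := abs_sub _ _
      _ ≤ |a n| * n + |(p-q)*(1-θ)*A n| := by
          rw [abs_mul]
          have h1 := hSb n ω
          have h2 := abs_nonneg (a n)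
          nlinarith [mul_le_mul_of_nonneg_left h1 h2]
  have hMint : ∀ n, Integrable (M n) μ :=
    fun n => hint _ _ ((hMmeas n).mono (F.le n)).aestronglyMeasurable (hMbound n)
  have hM2int : ∀ n, Integrable (fun ω => (M n ω)^2) μ := by
    intro n
    refine hint _ ((|a n| * n + |(p-q)*(1-θ)*A n|)^2)
      (((hMmeas n).mono (F.le n)).pow 2).aestronglyMeasurable fun ω => ?_
    rw [abs_pow]
    exact pow_le_pow_left₀ (abs_nonneg _) (hMbound n ω) 2
  have hmeas1 : MeasurableSet {ω | X 1 ω = 1} :=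
    (hXmeas 1).measurable (measurableSet_singleton 1)
  have hmeas2 : MeasurableSet {ω | X 1 ω = -1} :=
    (hXmeas 1).measurable (measurableSet_singleton (-1))
  have hiInd1 : ∫ ω, (if X 1 ω = 1 then (1:ℝ) else 0) ∂μ = p := by
    rw [← hIp 1]
    rw [integral_indicator_const (1:ℝ) hmeas1, measureReal_def, hinit1, smul_eq_mul, mul_one,
      ENNReal.toReal_ofReal hp]
  have hiInd2 : ∫ ω, (if X 1 ω = -1 then (1:ℝ) else 0) ∂μ = q := by
    rw [← hIm 1]
    rw [integral_indicator_const (1:ℝ) hmeas2, measureReal_def, hinit2, smul_eq_mul, mul_one,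
      ENNReal.toReal_ofReal hq]
  have hiX1 : ∫ ω, X 1 ω ∂μ = p - q := by
    have e : ∀ ω, X 1 ω = (if X 1 ω = 1 then (1:ℝ) else 0)
        - (if X 1 ω = -1 then (1:ℝ) else 0) := fun ω => congrFun (hXsplit 1) ω
    rw [integral_congr_ae (Eventually.of_forall e),
      integral_sub (hifint 1 1) (hifint (-1) 1), hiInd1, hiInd2]
  have hiX2 : ∫ ω, (X 1 ω)^2 ∂μ = p + q := by
    have e : ∀ ω, (X 1 ω)^2 = (if X 1 ω = 1 then (1:ℝ) else 0)
        + (if X 1 ω = -1 then (1:ℝ) else 0) := fun ω => congrFun (hX2split 1) ω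
    rw [integral_congr_ae (Eventually.of_forall e),
      integral_add (hifint 1 1) (hifint (-1) 1), hiInd1, hiInd2]
  have hM1 : ∀ ω, M 1 ω = X 1 ω - (p-q)*(1-θ) := by
    intro ω
    have hS1 : S 1 ω = X 1 ω := by rw [hS]; simp
    have hA1 : A 1 = 1 := by rw [hA]; simp [ha1]
    rw [hM, hS1, hA1, ha1]; ring
  have hbase : ∫ ω, (M 1 ω)^2 ∂μ ≤ p + q := by
    have e : ∀ ω, (M 1 ω)^2 = (X 1 ω)^2 - (2*((p-q)*(1-θ))) * X 1 ω + ((p-q)*(1-θ))^2 := by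
      intro ω; rw [hM1]; ring
    have i1 : Integrable (fun ω => (X 1 ω)^2 - (2*((p-q)*(1-θ))) * X 1 ω) μ :=
      (hX2int 1).sub ((hXint 1).const_mul _)
    have h12 := integral_add i1 (integrable_const (((p-q)*(1-θ))^2))
    have h3 := integral_sub (hX2int 1) ((hXint 1).const_mul (2*((p-q)*(1-θ))))
    rw [integral_congr_ae (Eventually.of_forall e), h12, h3, integral_const_mul,
      integral_const, hiX1, hiX2]
    simp only [measureReal_def, measure_univ, ENNReal.toReal_one, smul_eq_mul, one_mul]
    nlinarith [mul_nonneg (mul_nonneg hpq0.le (by linarith : (0:ℝ) ≤ 1-θ))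
      (mul_nonneg hpq0.le (by linarith : (0:ℝ) ≤ 1+θ))]
  have hEM2 : ∀ n : ℕ, 1 ≤ n →
      ∫ ω, (M n ω)^2 ∂μ ≤ (p+q) * ∑ k ∈ Finset.Icc 1 n, (a k)^2 := by
    intro n hn
    induction n, hn using Nat.le_induction with
    | base =>
      have : ∑ k ∈ Finset.Icc 1 1, (a k)^2 = 1 := by simp [ha1]
      rw [this, mul_one]; exact hbase
    | succ n hn ih =>
      have e : ∀ ω, (M (n+1) ω)^2 = (M n ω + a (n+1) * (X (n+1) ω - c n ω))^2 := by
        intro ω; rw [hMrec n hn ω]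
      have hkey := KEY n hn (M n) _ (hMmeas n) (hMbound n)
      calc ∫ ω, (M (n+1) ω)^2 ∂μ
          = ∫ ω, (M n ω + a (n+1) * (X (n+1) ω - c n ω))^2 ∂μ :=
            integral_congr_ae (Eventually.of_forall e)
        _ ≤ ∫ ω, (M n ω)^2 ∂μ + (a (n+1))^2 * (p+q) := hkey
        _ ≤ (p+q) * ∑ k ∈ Finset.Icc 1 n, (a k)^2 + (a (n+1))^2 * (p+q) := by linarith
        _ = (p+q) * ∑ k ∈ Finset.Icc 1 (n+1), (a k)^2 := by
            rw [Finset.sum_Icc_succ_top (by omega : 1 ≤ n+1)]; ring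
  have hEMtail : ∀ n : ℕ, 1 ≤ n → ∀ m : ℕ, n ≤ m →
      ∫ ω, (M m ω - M n ω)^2 ∂μ ≤ (p+q) * ∑ k ∈ Finset.Icc (n+1) m, (a k)^2 := by
    intro n hn m hm
    induction m, hm using Nat.le_induction with
    | base =>
      have e0 : ∀ ω, (M n ω - M n ω)^2 = 0 := by intro ω; ring
      rw [integral_congr_ae (Eventually.of_forall e0), integral_zero]
      have : Finset.Icc (n+1) n = ∅ := Finset.Icc_eq_empty (by omega)
      rw [this, Finset.sum_empty, mul_zero]
    | succ m hm ih =>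
      have hm1 : 1 ≤ m := le_trans hn hm
      have e : ∀ ω, (M (m+1) ω - M n ω)^2
          = ((M m ω - M n ω) + a (m+1) * (X (m+1) ω - c m ω))^2 := by
        intro ω; rw [hMrec m hm1 ω]; ring
      have hZmeas : StronglyMeasurable[F m] (fun ω => M m ω - M n ω) :=
        (hMmeas m).sub ((hMmeas n).mono (F.mono hm))
      have hZbd : ∀ ω, |M m ω - M n ω|
          ≤ (|a m| * m + |(p-q)*(1-θ)*A m|) + (|a n| * n + |(p-q)*(1-θ)*A n|) := by
        intro ω
        calc |M m ω - M n ω| ≤ |M m ω| + |M n ω| := abs_sub _ _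
          _ ≤ _ := add_le_add (hMbound m ω) (hMbound n ω)
      have hkey := KEY m hm1 (fun ω => M m ω - M n ω) _ hZmeas hZbd
      calc ∫ ω, (M (m+1) ω - M n ω)^2 ∂μ
          = ∫ ω, ((M m ω - M n ω) + a (m+1) * (X (m+1) ω - c m ω))^2 ∂μ :=
            integral_congr_ae (Eventually.of_forall e)
        _ ≤ ∫ ω, (M m ω - M n ω)^2 ∂μ + (a (m+1))^2 * (p+q) := hkey
        _ ≤ (p+q) * ∑ k ∈ Finset.Icc (n+1) m, (a k)^2 + (a (m+1))^2 * (p+q) := by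
            linarith
        _ = (p+q) * ∑ k ∈ Finset.Icc (n+1) (m+1), (a k)^2 := by
            rw [Finset.sum_Icc_succ_top (by omega : n+1 ≤ m+1)]; ring
  set b : ℕ → ℝ := fun k => (Real.Gamma (α+1) * Real.Gamma ((k:ℝ)+1)
      / Real.Gamma ((k:ℝ)+α+1))^2 with hbdef
  have hsumb : Summable b := lrrw_aux_summable (by linarith) hα1.le
  have hb0 : ∀ k, 0 ≤ b k := fun k => sq_nonneg _
  have hab : ∀ k : ℕ, (a (k+1))^2 = b k := by
    intro k
    rw [ha (k+1), hbdef]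
    push_cast
    rw [show ((k:ℝ)+1+α) = ((k:ℝ)+α+1) by ring]
    ring
  have hpart : ∀ n : ℕ, ∑ k ∈ Finset.Icc 1 n, (a k)^2 = ∑ j ∈ Finset.range n, b j := by
    intro n
    rw [← Finset.Ico_add_one_right_eq_Icc, Finset.sum_Ico_eq_sum_range]
    norm_num
    exact Finset.sum_congr rfl fun j _ => by rw [add_comm 1 j]; exact hab j
  have hT0 : 0 ≤ ∑' k, b k := tsum_nonneg hb0
  have hpartleT : ∀ n : ℕ, ∑ k ∈ Finset.Icc 1 n, (a k)^2 ≤ ∑' k, b k := by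
    intro n
    rw [hpart n]
    exact Summable.sum_le_tsum (Finset.range n) (fun i _ => hb0 i) hsumb
  have claim1 : ∀ n : ℕ, ∫ ω, (M n ω)^2 ∂μ ≤ (θ*(p+q)+(1-θ)*(p+q)) * ∑' k, b k := by
    intro n
    have hco : θ*(p+q)+(1-θ)*(p+q) = p + q := by ring
    rw [hco]
    rcases Nat.eq_zero_or_pos n with rfl | hn
    · have hM0 : ∀ ω, (M 0 ω)^2 = 0 := by
        intro ω; rw [hM, hS, hA]; simp
      rw [integral_congr_ae (Eventually.of_forall hM0), integral_zero]
      exact mul_nonneg (by linarith) hT0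
    · exact le_trans (hEM2 n hn) (mul_le_mul_of_nonneg_left (hpartleT n) (by linarith))
  -- shifted filtration and martingale
  let G : Filtration ℕ ‹MeasurableSpace Ω› :=
    ⟨fun n => F (max n 1), fun i j hij => F.mono (max_le_max hij le_rfl), fun n => F.le _⟩
  let N : ℕ → Ω → ℝ := fun n => M (max n 1)
  have hNadp : StronglyAdapted G N := fun n => hMmeas (max n 1)
  have hNint : ∀ n, Integrable (N n) μ := fun n => hMint _
  have hstep : ∀ n : ℕ, 1 ≤ n → μ[M (n+1)|F n] =ᵐ[μ] M n := by
    intro n hn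
    have e : M (n+1) = M n + (a (n+1)) • (fun ω => X (n+1) ω - c n ω) := by
      funext ω
      rw [Pi.add_apply, Pi.smul_apply, smul_eq_mul]
      exact hMrec n hn ω
    calc μ[M (n+1)|F n]
        = μ[M n + (a (n+1)) • (fun ω => X (n+1) ω - c n ω)|F n] := by rw [← e]
      _ =ᵐ[μ] μ[M n|F n] + μ[(a (n+1)) • (fun ω => X (n+1) ω - c n ω)|F n] :=
          condExp_add (hMint n) ((hξint n).smul (a (n+1))) _
      _ =ᵐ[μ] M n + (a (n+1)) • μ[(fun ω => X (n+1) ω - c n ω)|F n] := by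
          rw [condExp_of_stronglyMeasurable (F.le n) (hMmeas n) (hMint n)]
          exact (EventuallyEq.refl _ _).add (condExp_smul (a (n+1)) _ _)
      _ =ᵐ[μ] M n := by
          have h0 := hξzero n hn
          filter_upwards [h0] with ω hω
          rw [Pi.add_apply, Pi.smul_apply, hω]
          simp
  have hNmart : Martingale N G μ := by
    refine martingale_nat hNadp hNint ?_
    intro i
    cases i with
    | zero =>
      have h1 : μ[N 1|G 0] = N 0 := by
        show μ[M (max 1 1)|F (max 0 1)] = M (max 0 1)
        norm_num
        exact condExp_of_stronglyMeasurable (F.le 1) (hMmeas 1) (hMint 1)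
      rw [h1]
    | succ j =>
      have h1 : max (j+1) 1 = j+1 := max_eq_left (by omega)
      have h2 : max (j+1+1) 1 = j+1+1 := max_eq_left (by omega)
      show M (max (j+1) 1) =ᵐ[μ] μ[M (max (j+1+1) 1)|F (max (j+1) 1)]
      rw [h1, h2]
      exact (hstep (j+1) (by omega)).symm
  -- L1 boundedness
  set T : ℝ := ∑' k, b k with hTdef
  set R : ℝ := 1 + (p+q) * T with hRdef
  have hNL2 : ∀ n, ∫ ω, (N n ω)^2 ∂μ ≤ (p+q) * T := fun n =>
    le_trans (hEM2 (max n 1) (le_max_right n 1))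
      (mul_le_mul_of_nonneg_left (hpartleT _) (by linarith))
  have hNL1 : ∀ n, ∫ ω, |N n ω| ∂μ ≤ R := by
    intro n
    have h1 : ∀ ω, |N n ω| ≤ 1 + (N n ω)^2 := by
      intro ω
      nlinarith [sq_nonneg (|N n ω| - 1), sq_abs (N n ω)]
    have h2 : Integrable (fun ω => 1 + (N n ω)^2) μ := (integrable_const 1).add (hM2int _)
    calc ∫ ω, |N n ω| ∂μ ≤ ∫ ω, (1 + (N n ω)^2) ∂μ := integral_mono (hNint n).abs h2 h1
      _ = 1 + ∫ ω, (N n ω)^2 ∂μ := by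
          have h3 := integral_add (μ := μ) (integrable_const (1:ℝ)) (hM2int (max n 1))
          rw [h3]; simp; rfl
      _ ≤ R := by rw [hRdef]; linarith [hNL2 n]
  have hbdd : ∀ n, eLpNorm (N n) 1 μ ≤ ENNReal.ofReal R := by
    intro n
    rw [eLpNorm_one_eq_lintegral_enorm, ← ofReal_integral_norm_eq_lintegral_enorm (hNint n)]
    exact ENNReal.ofReal_le_ofReal (by simpa [Real.norm_eq_abs] using hNL1 n)
  have hbdd' : ∀ n, eLpNorm (N n) 1 μ ≤ ((R.toNNReal : NNReal) : ENNReal) := by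
    intro n
    exact le_trans (hbdd n) (le_of_eq rfl)
  have haeN := hNmart.submartingale.ae_tendsto_limitProcess hbdd'
  set L : Ω → ℝ := Filtration.limitProcess N G μ with hLdef
  have hLmeas : StronglyMeasurable L := Filtration.stronglyMeasurable_limit_process'
  have haeM : ∀ᵐ ω ∂μ, Tendsto (fun n : ℕ => M n ω) atTop (nhds (L ω)) := by
    filter_upwards [haeN] with ω hω
    refine hω.congr' ?_
    filter_upwards [eventually_ge_atTop 1] with m hm
    show M (max m 1) ω = M m ω
    rw [max_eq_left hm]
  -- tail bounds
  have htail : ∀ n m : ℕ, n ≤ m → ∑ k ∈ Finset.Icc (n+1) m, (a k)^2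
      ≤ T - ∑ j ∈ Finset.range n, b j := by
    intro n m hnm
    have hsplit : ∑ j ∈ Finset.range n, b j + ∑ k ∈ Finset.Icc (n+1) m, (a k)^2
        = ∑ k ∈ Finset.Icc 1 m, (a k)^2 := by
      calc ∑ j ∈ Finset.range n, b j + ∑ k ∈ Finset.Icc (n+1) m, (a k)^2
          = ∑ k ∈ Finset.Icc 1 n, (a k)^2 + ∑ k ∈ Finset.Icc (n+1) m, (a k)^2 := by
            rw [hpart n]
        _ = ∑ k ∈ Finset.Ioc 0 n, (a k)^2 + ∑ k ∈ Finset.Ioc n m, (a k)^2 := by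
            rw [Finset.Icc_add_one_left_eq_Ioc, ← Finset.Icc_add_one_left_eq_Ioc 0 n, zero_add]
        _ = ∑ k ∈ Finset.Ioc 0 m, (a k)^2 :=
            Finset.sum_Ioc_consecutive _ (by omega) hnm
        _ = ∑ k ∈ Finset.Icc 1 m, (a k)^2 := by rw [← Finset.Icc_add_one_left_eq_Ioc 0 m, zero_add]
    have := hpartleT m
    linarith
  have htail0 : Tendsto (fun n : ℕ => (p+q) * (T - ∑ j ∈ Finset.range n, b j)) atTop
      (nhds 0) := by
    have h1 : Tendsto (fun n : ℕ => ∑ j ∈ Finset.range n, b j) atTop (nhds T) :=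
      hsumb.hasSum.tendsto_sum_nat
    have h2 := (tendsto_const_nhds (x := T) (f := atTop (α := ℕ))).sub h1
    rw [sub_self] at h2
    have h3 := h2.const_mul (p+q)
    rw [mul_zero] at h3
    exact h3
  -- Fatou argument
  have hL2conv : ∀ n : ℕ, 1 ≤ n → ∫ ω, (M n ω - L ω)^2 ∂μ
      ≤ (p+q) * (T - ∑ j ∈ Finset.range n, b j) := by
    intro n hn
    have hmeasg : ∀ m : ℕ, Measurable fun ω => ENNReal.ofReal ((M n ω - M m ω)^2) := by
      intro m
      exact ((((hMmeas n).mono (F.le n)).sub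
        ((hMmeas m).mono (F.le m))).measurable.pow_const 2).ennreal_ofReal
    have hptw : ∀ᵐ ω ∂μ, Tendsto (fun m => ENNReal.ofReal ((M n ω - M m ω)^2)) atTop
        (nhds (ENNReal.ofReal ((M n ω - L ω)^2))) := by
      filter_upwards [haeM] with ω hω
      exact (ENNReal.continuous_ofReal.tendsto _).comp
        ((tendsto_const_nhds.sub hω).pow 2)
    have hbnd : ∀ m : ℕ, n ≤ m → ∫⁻ ω, ENNReal.ofReal ((M n ω - M m ω)^2) ∂μ
        ≤ ENNReal.ofReal ((p+q) * (T - ∑ j ∈ Finset.range n, b j)) := by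
      intro m hm
      have hi : Integrable (fun ω => (M n ω - M m ω)^2) μ := by
        refine hint _ (((|a n| * n + |(p-q)*(1-θ)*A n|) + (|a m| * m + |(p-q)*(1-θ)*A m|))^2)
          ((((hMmeas n).mono (F.le n)).sub ((hMmeas m).mono (F.le m))).pow 2).aestronglyMeasurable
          fun ω => ?_
        rw [abs_pow]
        refine pow_le_pow_left₀ (abs_nonneg _) ?_ 2
        calc |M n ω - M m ω| ≤ |M n ω| + |M m ω| := abs_sub _ _
          _ ≤ _ := add_le_add (hMbound n ω) (hMbound m ω)
      rw [← ofReal_integral_eq_lintegral_ofReal hi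
        (Eventually.of_forall fun ω => sq_nonneg _)]
      apply ENNReal.ofReal_le_ofReal
      calc ∫ ω, (M n ω - M m ω)^2 ∂μ = ∫ ω, (M m ω - M n ω)^2 ∂μ :=
            integral_congr_ae (Eventually.of_forall fun ω => by ring)
        _ ≤ (p+q) * ∑ k ∈ Finset.Icc (n+1) m, (a k)^2 := hEMtail n hn m hm
        _ ≤ (p+q) * (T - ∑ j ∈ Finset.range n, b j) :=
            mul_le_mul_of_nonneg_left (htail n m hm) (by linarith)
    have e1 : ∫⁻ ω, ENNReal.ofReal ((M n ω - L ω)^2) ∂μ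
        ≤ ENNReal.ofReal ((p+q) * (T - ∑ j ∈ Finset.range n, b j)) := by
      have e2 : ∫⁻ ω, ENNReal.ofReal ((M n ω - L ω)^2) ∂μ
          = ∫⁻ ω, Filter.liminf (fun m => ENNReal.ofReal ((M n ω - M m ω)^2)) atTop ∂μ := by
        refine lintegral_congr_ae ?_
        filter_upwards [hptw] with ω hω
        exact hω.liminf_eq.symm
      rw [e2]
      refine le_trans (lintegral_liminf_le hmeasg) ?_
      have e3 : Filter.liminf (fun m => ∫⁻ ω, ENNReal.ofReal ((M n ω - M m ω)^2) ∂μ) atTop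
          ≤ Filter.liminf (fun _ : ℕ =>
              ENNReal.ofReal ((p+q) * (T - ∑ j ∈ Finset.range n, b j))) atTop := by
        refine Filter.liminf_le_liminf ?_
        filter_upwards [eventually_ge_atTop n] with m hm
        exact hbnd m hm
      rw [Filter.liminf_const] at e3
      exact e3
    have hmeas2 : AEStronglyMeasurable (fun ω => (M n ω - L ω)^2) μ :=
      ((((hMmeas n).mono (F.le n)).sub hLmeas).pow 2).aestronglyMeasurable
    rw [integral_eq_lintegral_of_nonneg_ae (Eventually.of_forall fun ω => sq_nonneg _) hmeas2]
    calc (∫⁻ ω, ENNReal.ofReal ((M n ω - L ω)^2) ∂μ).toReal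
        ≤ (ENNReal.ofReal ((p+q) * (T - ∑ j ∈ Finset.range n, b j))).toReal :=
          ENNReal.toReal_mono ENNReal.ofReal_ne_top e1
      _ = (p+q) * (T - ∑ j ∈ Finset.range n, b j) := by
          have hTge : ∑ j ∈ Finset.range n, b j ≤ T :=
            Summable.sum_le_tsum _ (fun i _ => hb0 i) hsumb
          exact ENNReal.toReal_ofReal (mul_nonneg (by linarith) (by linarith))
  refine ⟨claim1, L, haeM, ?_⟩
  refine squeeze_zero' ?_ ?_ htail0
  · exact Eventually.of_forall fun n => integral_nonneg fun ω => sq_nonneg _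
  · filter_upwards [eventually_ge_atTop 1] with n hn
    exact hL2conv n hn
end

section
/- For the LRRW, E[S_n] = (β + ω(A_n − 1))/a_n for all n ≥ 1, where β = p − q, and consequently E[M_n] = β − ω for all n ≥ 1. -/
open MeasureTheory ProbabilityTheory Filter Real Finset

theorem lrrw_mean_Sn
    {Ω : Type*} [MeasurableSpace Ω] (μ : Measure Ω) [IsProbabilityMeasure μ]
    (p q r θ : ℝ) (hp : 0 ≤ p) (hq : 0 ≤ q) (hr : 0 ≤ r) (hpqr : p + q + r = 1)
    (hθ0 : 0 ≤ θ) (hθ1 : θ < 1)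
    (X : ℕ → Ω → ℝ) (hXmeas : ∀ n, StronglyMeasurable (X n))
    (hXval : ∀ n ω, X n ω = 1 ∨ X n ω = -1 ∨ X n ω = 0)
    (hX0 : ∀ ω, X 0 ω = 0)
    (S : ℕ → Ω → ℝ) (hS : ∀ n ω, S n ω = ∑ k ∈ Finset.Icc 1 n, X k ω)
    (Np Nm : ℕ → Ω → ℝ)
    (hNp : ∀ n ω, Np n ω = ∑ k ∈ Finset.Icc 1 n, if X k ω = 1 then (1 : ℝ) else 0)
    (hNm : ∀ n ω, Nm n ω = ∑ k ∈ Finset.Icc 1 n, if X k ω = -1 then (1 : ℝ) else 0)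
    (hinit1 : μ {ω | X 1 ω = 1} = ENNReal.ofReal p)
    (hinit2 : μ {ω | X 1 ω = -1} = ENNReal.ofReal q)
    (hcond1 : ∀ n : ℕ, 1 ≤ n →
      μ[Set.indicator {ω | X (n + 1) ω = 1} (fun _ => (1 : ℝ)) |
          (MeasureTheory.Filtration.natural X hXmeas) n]
        =ᵐ[μ] fun ω => (1 - θ) * p + θ * (p * Np n ω + q * Nm n ω) / n)
    (hcond2 : ∀ n : ℕ, 1 ≤ n →
      μ[Set.indicator {ω | X (n + 1) ω = -1} (fun _ => (1 : ℝ)) |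
          (MeasureTheory.Filtration.natural X hXmeas) n]
        =ᵐ[μ] fun ω => (1 - θ) * q + θ * (q * Np n ω + p * Nm n ω) / n)
    (a : ℕ → ℝ)
    (ha : ∀ n : ℕ, a n = ∏ k ∈ Finset.Icc 1 (n - 1), (1 + θ * (p - q) / (k : ℝ))⁻¹)
    (A : ℕ → ℝ) (hA : ∀ n : ℕ, A n = ∑ k ∈ Finset.Icc 1 n, a k)
    (M : ℕ → Ω → ℝ)
    (hM : ∀ n ω, M n ω = a n * S n ω - (p - q) * (1 - θ) * A n) :
    ∀ n : ℕ, 1 ≤ n →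
      (∫ ω, S n ω ∂μ = ((p - q) + (p - q) * (1 - θ) * (A n - 1)) / a n) ∧
      ∫ ω, M n ω ∂μ = (p - q) - (p - q) * (1 - θ) := by
  have hp1 : p ≤ 1 := by linarith
  have hq1 : q ≤ 1 := by linarith
  -- indicator integrability
  have hind_int : ∀ (k : ℕ) (c : ℝ),
      Integrable (Set.indicator {ω | X k ω = c} (fun _ => (1:ℝ))) μ := by
    intro k c
    exact (integrable_const (1:ℝ)).indicator ((hXmeas k).measurable (measurableSet_singleton c))
  -- pointwise decomposition of X
  have hXdec : ∀ (k : ℕ) (ω : Ω), X k ω =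
      Set.indicator {ω | X k ω = 1} (fun _ => (1:ℝ)) ω
        - Set.indicator {ω | X k ω = -1} (fun _ => (1:ℝ)) ω := by
    intro k ω
    rcases hXval k ω with h | h | h <;> simp [Set.indicator_apply, h] <;> norm_num
  have hXint : ∀ k : ℕ, Integrable (X k) μ := by
    intro k
    have heq : X k = fun ω => Set.indicator {ω | X k ω = 1} (fun _ => (1:ℝ)) ω
        - Set.indicator {ω | X k ω = -1} (fun _ => (1:ℝ)) ω := funext (hXdec k)
    rw [heq]
    exact (hind_int k 1).sub (hind_int k (-1))
  have hSint : ∀ n : ℕ, Integrable (S n) μ := by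
    intro n
    have heq : S n = fun ω => ∑ k ∈ Finset.Icc 1 n, X k ω := funext fun ω => hS n ω
    rw [heq]
    exact integrable_finset_sum _ fun k _ => hXint k
  have hNpint : ∀ n : ℕ, Integrable (Np n) μ := by
    intro n
    have heq : Np n = fun ω => ∑ k ∈ Finset.Icc 1 n,
        Set.indicator {ω | X k ω = 1} (fun _ => (1:ℝ)) ω := by
      funext ω
      rw [hNp]
      exact Finset.sum_congr rfl fun k _ => by simp [Set.indicator_apply]
    rw [heq]
    exact integrable_finset_sum _ fun k _ => hind_int k 1
  have hNmint : ∀ n : ℕ, Integrable (Nm n) μ := by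
    intro n
    have heq : Nm n = fun ω => ∑ k ∈ Finset.Icc 1 n,
        Set.indicator {ω | X k ω = -1} (fun _ => (1:ℝ)) ω := by
      funext ω
      rw [hNm]
      exact Finset.sum_congr rfl fun k _ => by simp [Set.indicator_apply]
    rw [heq]
    exact integrable_finset_sum _ fun k _ => hind_int k (-1)
  have hNpNm : ∀ (n : ℕ) (ω : Ω), Np n ω - Nm n ω = S n ω := by
    intro n ω
    rw [hNp, hNm, hS, ← Finset.sum_sub_distrib]
    refine Finset.sum_congr rfl fun k _ => ?_
    rcases hXval k ω with h | h | h <;> simp [h] <;> norm_num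
  -- positivity of factors
  have hfac_pos : ∀ k : ℕ, 1 ≤ k → 0 < 1 + θ * (p - q) / (k : ℝ) := by
    intro k hk
    have hk' : (1:ℝ) ≤ (k : ℝ) := by exact_mod_cast hk
    have hden : (0:ℝ) < (k : ℝ) := by linarith
    have heq : 1 + θ * (p - q) / (k : ℝ) = ((k : ℝ) + θ * (p - q)) / (k : ℝ) := by
      field_simp
    rw [heq]
    apply div_pos _ hden
    nlinarith
  have ha_pos : ∀ n : ℕ, 0 < a n := by
    intro n
    rw [ha]
    exact Finset.prod_pos fun k hk =>
      inv_pos.mpr (hfac_pos k (Finset.mem_Icc.mp hk).1)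
  -- recurrence for a
  have ha_rec : ∀ n : ℕ, 1 ≤ n → a n = a (n+1) * (1 + θ * (p - q) / (n : ℝ)) := by
    intro n hn
    obtain ⟨m, rfl⟩ : ∃ m, n = m + 1 := ⟨n - 1, by omega⟩
    rw [ha, ha]
    have h1 : (m + 1 + 1) - 1 = m + 1 := by omega
    have h2 : (m + 1) - 1 = m := by omega
    rw [h1, h2, Finset.prod_Icc_succ_top (by omega : 1 ≤ m + 1), mul_assoc,
      inv_mul_cancel₀ (ne_of_gt (hfac_pos (m+1) (by omega))), mul_one]
  have hA_rec : ∀ n : ℕ, 1 ≤ n → A (n+1) = A n + a (n+1) := by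
    intro n hn
    rw [hA, hA, Finset.sum_Icc_succ_top (by omega : 1 ≤ n + 1)]
  -- the key conditional-expectation step
  have hstep : ∀ n : ℕ, 1 ≤ n → ∫ ω, X (n+1) ω ∂μ
      = (1-θ)*(p-q) + θ*(p-q)/(n:ℝ) * ∫ ω, S n ω ∂μ := by
    intro n hn
    have hf1int : Integrable (fun ω => (1-θ)*p + θ*(p*Np n ω + q*Nm n ω)/(n:ℝ)) μ := by
      apply Integrable.add (integrable_const _)
      apply Integrable.div_const
      apply Integrable.const_mul
      exact ((hNpint n).const_mul p).add ((hNmint n).const_mul q)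
    have hf2int : Integrable (fun ω => (1-θ)*q + θ*(q*Np n ω + p*Nm n ω)/(n:ℝ)) μ := by
      apply Integrable.add (integrable_const _)
      apply Integrable.div_const
      apply Integrable.const_mul
      exact ((hNpint n).const_mul q).add ((hNmint n).const_mul p)
    have key1 : ∫ ω, Set.indicator {ω | X (n+1) ω = 1} (fun _ => (1:ℝ)) ω ∂μ
        = ∫ ω, ((1-θ)*p + θ*(p*Np n ω + q*Nm n ω)/(n:ℝ)) ∂μ := by
      rw [← integral_condExp ((MeasureTheory.Filtration.natural X hXmeas).le n) (f := Set.indicator {ω | X (n+1) ω = 1} (fun _ => (1:ℝ)))]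
      exact integral_congr_ae (hcond1 n hn)
    have key2 : ∫ ω, Set.indicator {ω | X (n+1) ω = -1} (fun _ => (1:ℝ)) ω ∂μ
        = ∫ ω, ((1-θ)*q + θ*(q*Np n ω + p*Nm n ω)/(n:ℝ)) ∂μ := by
      rw [← integral_condExp ((MeasureTheory.Filtration.natural X hXmeas).le n) (f := Set.indicator {ω | X (n+1) ω = -1} (fun _ => (1:ℝ)))]
      exact integral_congr_ae (hcond2 n hn)
    have h1 : ∫ ω, X (n+1) ω ∂μ
        = ∫ ω, Set.indicator {ω | X (n+1) ω = 1} (fun _ => (1:ℝ)) ω ∂μ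
          - ∫ ω, Set.indicator {ω | X (n+1) ω = -1} (fun _ => (1:ℝ)) ω ∂μ := by
      rw [← integral_sub (hind_int (n+1) 1) (hind_int (n+1) (-1))]
      exact integral_congr_ae (Filter.Eventually.of_forall fun ω => hXdec (n+1) ω)
    have hnne : ((n:ℝ)) ≠ 0 := by
      have : (0:ℝ) < (n:ℝ) := by exact_mod_cast Nat.pos_of_ne_zero (by omega)
      linarith
    rw [h1, key1, key2, ← integral_sub hf1int hf2int]
    have heq : (fun ω => ((1-θ)*p + θ*(p*Np n ω + q*Nm n ω)/(n:ℝ))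
          - ((1-θ)*q + θ*(q*Np n ω + p*Nm n ω)/(n:ℝ)))
        = fun ω => (1-θ)*(p-q) + θ*(p-q)/(n:ℝ) * S n ω := by
      funext ω
      rw [← hNpNm n ω]
      field_simp
      ring
    rw [heq, integral_add (integrable_const _) ((hSint n).const_mul _),
      integral_const, integral_const_mul]
    simp
  -- main formula for E[S n]
  have main : ∀ n : ℕ, 1 ≤ n →
      ∫ ω, S n ω ∂μ = ((p - q) + (p - q) * (1 - θ) * (A n - 1)) / a n := by
    intro n hn
    induction n, hn using Nat.le_induction with
    | base =>
      have h1 : ∫ ω, S 1 ω ∂μ = ∫ ω, X 1 ω ∂μ := by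
        refine integral_congr_ae (Filter.Eventually.of_forall fun ω => ?_)
        rw [hS]
        simp
      have h2 : ∫ ω, X 1 ω ∂μ = p - q := by
        have hd : ∫ ω, X 1 ω ∂μ
            = ∫ ω, Set.indicator {ω | X 1 ω = 1} (fun _ => (1:ℝ)) ω ∂μ
              - ∫ ω, Set.indicator {ω | X 1 ω = -1} (fun _ => (1:ℝ)) ω ∂μ := by
          rw [← integral_sub (hind_int 1 1) (hind_int 1 (-1))]
          exact integral_congr_ae (Filter.Eventually.of_forall fun ω => hXdec 1 ω)
        rw [hd, integral_indicator_const (1:ℝ)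
            (show MeasurableSet {ω | X 1 ω = 1} from
              (hXmeas 1).measurable (measurableSet_singleton 1)),
          integral_indicator_const (1:ℝ)
            (show MeasurableSet {ω | X 1 ω = -1} from
              (hXmeas 1).measurable (measurableSet_singleton (-1))),
          measureReal_def, measureReal_def, hinit1, hinit2, ENNReal.toReal_ofReal hp, ENNReal.toReal_ofReal hq]
        simp
      have ha1 : a 1 = 1 := by rw [ha]; simp
      have hA1 : A 1 = 1 := by rw [hA]; simp [ha1]
      rw [h1, h2, ha1, hA1]
      ring
    | succ n hn ih =>
      have hS1 : ∫ ω, S (n+1) ω ∂μ = ∫ ω, S n ω ∂μ + ∫ ω, X (n+1) ω ∂μ := by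
        have hpt : ∀ ω, S (n+1) ω = S n ω + X (n+1) ω := by
          intro ω
          rw [hS, hS, Finset.sum_Icc_succ_top (by omega : 1 ≤ n + 1)]
        rw [integral_congr_ae (Filter.Eventually.of_forall hpt),
          integral_add (hSint n) (hXint (n+1))]
      have hnne : ((n:ℝ)) ≠ 0 := by
        have : (0:ℝ) < (n:ℝ) := by exact_mod_cast Nat.pos_of_ne_zero (by omega)
        linarith
      have hfne : (1 + θ * (p - q) / (n : ℝ)) ≠ 0 := ne_of_gt (hfac_pos n hn)
      have han1 : a (n+1) ≠ 0 := ne_of_gt (ha_pos (n+1))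
      rw [hS1, hstep n hn, ih, hA_rec n hn, ha_rec n hn]
      set c := θ * (p - q) / (n : ℝ) with hc
      have h1c : 1 + c ≠ 0 := hfne
      field_simp
      ring
  intro n hn
  refine ⟨main n hn, ?_⟩
  have hMeq : ∫ ω, M n ω ∂μ = a n * (∫ ω, S n ω ∂μ) - (p - q) * (1 - θ) * A n := by
    have heq : (fun ω => M n ω)
        = fun ω => a n * S n ω - (p - q) * (1 - θ) * A n := funext (hM n)
    rw [heq, integral_sub ((hSint n).const_mul _) (integrable_const _),
      integral_const_mul, integral_const]
    simp
  have han : a n ≠ 0 := ne_of_gt (ha_pos n)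
  rw [hMeq, main n hn]
  field_simp
  ring
end
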